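/- arXiv:0901.0139 — 9 statements merged into one kernel-verified Lean document; each statement's English description precedes it below -/
import Mathlib

section
/- Let ψ_1, ψ_2, …, ψ_{n+1} be complex polynomials with ψ_1'' = 0, ψ_1 ≠ 0, and ψ_k'' = ψ_{k−1} for 2 ≤ k ≤ n+1, and set Θ_j = W(ψ_1, …, ψ_j) for j = n, n+1 (with Θ_0 = 1). Then the consecutive Wronskians satisfy the bilinear (Tkachenko) equation Θ_{n+1}'' Θ_n − 2 Θ_{n+1}' Θ_n' + Θ_{n+1} Θ_n'' = 0 identically. In particular the Adler–Moser polynomials, which are such Wronskians of the polynomials θ_1, θ_3, …, θ_{2n+1} generated by exp(zλ − ∑_{j≥2} κ_j λ^{2j−1}/(2j−1)) (these satisfy θ_{2k−1}'' = θ_{2k−3}), solve this equation. -/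
open Polynomial

/-- The Wronskian of a finite family of polynomials:
`W(p_1, …, p_ℓ) = det [ (d/dz)^{i-1} p_j ]`. -/
noncomputable def wronskian {l : ℕ} (p : Fin l → Polynomial ℂ) : Polynomial ℂ :=
  (Matrix.of fun i j : Fin l => (Polynomial.derivative^[(i : ℕ)] (p j))).det

open Matrix Finset Submodule


lemma derivFinsetProd {ι : Type*} [DecidableEq ι] (s : Finset ι) (f : ι → Polynomial ℂ) :
    derivative (∏ i ∈ s, f i) = ∑ i ∈ s, (∏ j ∈ s.erase i, f j) * derivative (f i) := by
  induction s using Finset.induction_on with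
  | empty => simp
  | @insert a s ha ih =>
    rw [Finset.prod_insert ha, derivative_mul, ih, Finset.sum_insert ha,
      Finset.erase_insert ha, Finset.mul_sum]
    congr 1
    · rw [mul_comm]
    · refine Finset.sum_congr rfl fun i hi => ?_
      have hia : i ≠ a := fun h => ha (h ▸ hi)
      rw [Finset.erase_insert_of_ne hia.symm, Finset.prod_insert
        (fun h => ha (Finset.mem_of_mem_erase h)), mul_assoc]

lemma deriv_det {N : ℕ} (M : Matrix (Fin N) (Fin N) (Polynomial ℂ)) :
    derivative M.det = ∑ p, (M.updateRow p fun j => derivative (M p j)).det := by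
  classical
  simp only [Matrix.det_apply]
  rw [map_sum]
  rw [Finset.sum_comm]
  refine Finset.sum_congr rfl fun σ _ => ?_
  rw [Units.smul_def, map_zsmul, derivFinsetProd, ← Units.smul_def]
  rw [← Equiv.sum_comp σ (fun p => Equiv.Perm.sign σ •
      ∏ i, (M.updateRow p fun j => derivative (M p j)) (σ i) i)]
  rw [← Finset.smul_sum]
  congr 1
  refine Finset.sum_congr rfl fun i₀ _ => ?_
  have key : ∀ i, (M.updateRow (σ i₀) fun j => derivative (M (σ i₀) j)) (σ i) i
      = if i = i₀ then derivative (M (σ i₀) i) else M (σ i) i := by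
    intro i
    by_cases h : i = i₀
    · subst h; simp [Matrix.updateRow_self]
    · rw [Matrix.updateRow_ne (fun hc => h (σ.injective hc)), if_neg h]
  calc (∏ j ∈ Finset.univ.erase i₀, M (σ j) j) * derivative (M (σ i₀) i₀)
      = ∏ i, if i = i₀ then derivative (M (σ i₀) i) else M (σ i) i := by
        rw [show (fun i => if i = i₀ then derivative (M (σ i₀) i) else M (σ i) i)
            = Function.update (fun i => M (σ i) i) i₀ (derivative (M (σ i₀) i₀)) from ?_]
        · rw [Finset.prod_update_of_mem (Finset.mem_univ i₀), mul_comm, ← Finset.erase_eq]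
        · funext i
          by_cases h : i = i₀ <;> simp [Function.update, h]
    _ = _ := by
        refine Finset.prod_congr rfl fun i _ => (key i).symm

noncomputable def dF {K : Type*} [CommRing K] {N : ℕ} (M : Matrix (Fin N) (Fin N) K)
    (p q : Fin N) (x y : Fin N → K) : K := ((M.updateRow p x).updateRow q y).det

lemma det_zero_of_row_mem_span' {N : ℕ} {R : Type*} [CommRing R]
    (M : Matrix (Fin N) (Fin N) R) (r : Fin N)
    (h : M r ∈ Submodule.span R (M '' {i | i ≠ r})) : M.det = 0 := by
  classical
  have main : ∀ x ∈ Submodule.span R (M '' {i | i ≠ r}), (M.updateRow r x).det = 0 := by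
    intro x hx
    induction hx using Submodule.span_induction with
    | mem y hy =>
      obtain ⟨i, hi, rfl⟩ := hy
      exact Matrix.det_zero_of_row_eq (Ne.symm hi) (by
        rw [Matrix.updateRow_self, Matrix.updateRow_ne hi])
    | zero => exact Matrix.det_eq_zero_of_row_eq_zero r (by simp)
    | add y z _ _ hy hz => rw [Matrix.det_updateRow_add, hy, hz, add_zero]
    | smul c y _ hy => rw [Matrix.det_updateRow_smul, hy, mul_zero]
  have := main (M r) h
  rwa [Matrix.updateRow_eq_self] at this

lemma pluecker {K : Type*} [Field K] {N : ℕ} (M : Matrix (Fin N) (Fin N) K)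
    (p q : Fin N) (hpq : p ≠ q) (a b c d : Fin N → K) :
    dF M p q a b * dF M p q c d - dF M p q a c * dF M p q b d
      + dF M p q a d * dF M p q b c = 0 := by
  classical
  set F : (Fin N → K) → (Fin N → K) → K :=
    fun x y => ((M.updateRow p x).updateRow q y).det with hFdef
  show F a b * F c d - F a c * F b d + F a d * F b c = 0
  -- basic facts about F
  have hswap : ∀ x y, (M.updateRow p x).updateRow q y = (M.updateRow q y).updateRow p x := by
    intro x y
    ext i j
    rcases eq_or_ne i q with rfl | h1
    · rw [Matrix.updateRow_self, Matrix.updateRow_ne (Ne.symm hpq), Matrix.updateRow_self]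
    · rw [Matrix.updateRow_ne h1]
      rcases eq_or_ne i p with rfl | h2
      · rw [Matrix.updateRow_self, Matrix.updateRow_self]
      · rw [Matrix.updateRow_ne h2, Matrix.updateRow_ne h2, Matrix.updateRow_ne h1]
  have hadd2 : ∀ x u v, F x (u + v) = F x u + F x v := by
    intro x u v; simp only [hFdef]; rw [Matrix.det_updateRow_add]
  have hadd1 : ∀ u v y, F (u + v) y = F u y + F v y := by
    intro u v y; simp only [hFdef]
    rw [hswap, hswap, hswap, Matrix.det_updateRow_add]
  have hsmul1 : ∀ (t : K) u y, F (t • u) y = t * F u y := by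
    intro t u y; simp only [hFdef]
    rw [hswap, hswap, Matrix.det_updateRow_smul]
  have hzero1 : ∀ y, F 0 y = 0 := by
    intro y; simp only [hFdef]
    rw [hswap]
    exact Matrix.det_eq_zero_of_row_eq_zero p (by simp)
  have hxx : ∀ x, F x x = 0 := by
    intro x
    refine Matrix.det_zero_of_row_eq hpq ?_
    rw [Matrix.updateRow_ne hpq, Matrix.updateRow_self, Matrix.updateRow_self]
  have hanti : ∀ x y, F y x = -F x y := by
    intro x y
    have h0 := hxx (x + y)
    rw [hadd1, hadd2, hadd2, hxx, hxx] at h0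
    linear_combination h0
  have hrowF : ∀ j : Fin N, j ≠ p → j ≠ q → ∀ y, F (M j) y = 0 := by
    intro j hjp hjq y
    refine Matrix.det_zero_of_row_eq (Ne.symm hjp) ?_
    rw [Matrix.updateRow_ne hpq, Matrix.updateRow_self,
      Matrix.updateRow_ne hjq, Matrix.updateRow_ne hjp]
  set O : Set (Fin N → K) := M '' {i | i ≠ p ∧ i ≠ q} with hO
  -- the key substitution lemma
  have Key : ∀ x y z w : Fin N → K, x ∈ Submodule.span K (O ∪ {y, z, w}) →
      F x y * F z w - F x z * F y w + F x w * F y z = 0 := by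
    intro x y z w hx
    induction hx using Submodule.span_induction with
    | mem u hu =>
      rcases hu with hu | hu
      · obtain ⟨i, ⟨hip, hiq⟩, rfl⟩ := hu
        rw [hrowF i hip hiq, hrowF i hip hiq, hrowF i hip hiq]; ring
      · rcases hu with rfl | rfl | rfl
        · rw [hxx]; ring
        · rw [hxx, hanti y u]; ring
        · rw [hxx, hanti y u, hanti z u]; ring
    | zero => rw [hzero1, hzero1, hzero1]; ring
    | add u v _ _ hu hv =>
      rw [hadd1, hadd1, hadd1]; linear_combination hu + hv
    | smul t u _ hu =>
      rw [hsmul1, hsmul1, hsmul1]; linear_combination t * hu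
  by_cases hind : LinearIndependent K (fun i : {i : Fin N // i ≠ p ∧ i ≠ q} => M i)
  · -- independent case: go to the quotient
    set W := Submodule.span K (Set.range (fun i : {i : Fin N // i ≠ p ∧ i ≠ q} => M i)) with hW
    have hrange : Set.range (fun i : {i : Fin N // i ≠ p ∧ i ≠ q} => M i) = O := by
      rw [hO]; ext v; constructor
      · rintro ⟨i, rfl⟩; exact ⟨i.1, i.2, rfl⟩
      · rintro ⟨i, hi, rfl⟩; exact ⟨⟨i, hi⟩, rfl⟩
    have hN2 : 2 ≤ N := by
      have : 1 < Fintype.card (Fin N) := Fintype.one_lt_card_iff_nontrivial.mpr ⟨⟨p, q, hpq⟩⟩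
      simp at this; omega
    have hcard : Fintype.card {i : Fin N // i ≠ p ∧ i ≠ q} = N - 2 := by
      rw [Fintype.card_congr (Equiv.subtypeEquivRight (q := fun i => i ∈ ({p, q} : Finset (Fin N))ᶜ)
        (by intro i; simp [not_or]))]
      rw [Fintype.card_coe, Finset.card_compl, Finset.card_pair hpq, Fintype.card_fin]
    have hfinW : Module.finrank K W = N - 2 := by
      rw [hW, finrank_span_eq_card hind, hcard]
    have hQ : Module.finrank K ((Fin N → K) ⧸ W) = 2 := by
      have h1 := Submodule.finrank_quotient_add_finrank W
      rw [hfinW, Module.finrank_fintype_fun_eq_card, Fintype.card_fin] at h1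
      omega
    set π := W.mkQ with hπ
    set fam : Fin 4 → ((Fin N → K) ⧸ W) := ![π a, π b, π c, π d] with hfam
    have hdep : ¬ LinearIndependent K fam := by
      intro h
      have := h.fintype_card_le_finrank
      rw [hQ, Fintype.card_fin] at this
      omega
    rw [linearIndependent_iff_notMem_span] at hdep
    push_neg at hdep
    obtain ⟨i4, hi4⟩ := hdep
    have pull : ∀ (x : Fin N → K) (s : Set (Fin N → K)), π x ∈ Submodule.span K (π '' s) →
        x ∈ Submodule.span K (O ∪ s) := by
      intro x s hx
      rw [Submodule.span_image] at hx
      obtain ⟨u, hu, hux⟩ := Submodule.mem_map.mp hx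
      have hxu : x - u ∈ W := by
        rw [← Submodule.ker_mkQ W, LinearMap.mem_ker, map_sub, hux, sub_self]
      rw [Submodule.span_union]
      rw [show x = (x - u) + u by ring]
      refine Submodule.add_mem _ ?_ ?_
      · exact Submodule.mem_sup_left (by rwa [← hrange, ← hW])
      · exact Submodule.mem_sup_right hu
    have himg : ∀ (i : Fin 4) (s : Set (Fin N → K)),
        (∀ j : Fin 4, j ≠ i → fam j ∈ π '' s) → fam '' (Set.univ \ {i}) ⊆ π '' s := by
      rintro i s hs v ⟨j, hj, rfl⟩
      exact hs j (by simpa using hj.2)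
    fin_cases i4
    · have ha : a ∈ Submodule.span K (O ∪ {b, c, d}) := by
        refine pull a {b, c, d} (Submodule.span_mono (himg 0 _ ?_) hi4)
        intro j hj
        fin_cases j
        · exact absurd rfl hj
        · exact ⟨b, by simp, rfl⟩
        · exact ⟨c, by simp, rfl⟩
        · exact ⟨d, by simp, rfl⟩
      exact Key a b c d ha
    · have hb : b ∈ Submodule.span K (O ∪ {a, c, d}) := by
        refine pull b {a, c, d} (Submodule.span_mono (himg 1 _ ?_) hi4)
        intro j hj
        fin_cases j
        · exact ⟨a, by simp, rfl⟩
        · exact absurd rfl hj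
        · exact ⟨c, by simp, rfl⟩
        · exact ⟨d, by simp, rfl⟩
      have k := Key b a c d hb
      rw [hanti a b] at k
      linear_combination -k
    · have hc : c ∈ Submodule.span K (O ∪ {a, b, d}) := by
        refine pull c {a, b, d} (Submodule.span_mono (himg 2 _ ?_) hi4)
        intro j hj
        fin_cases j
        · exact ⟨a, by simp, rfl⟩
        · exact ⟨b, by simp, rfl⟩
        · exact absurd rfl hj
        · exact ⟨d, by simp, rfl⟩
      have k := Key c a b d hc
      rw [hanti a c, hanti b c] at k
      linear_combination k
    · have hd : d ∈ Submodule.span K (O ∪ {a, b, c}) := by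
        refine pull d {a, b, c} (Submodule.span_mono (himg 3 _ ?_) hi4)
        intro j hj
        fin_cases j
        · exact ⟨a, by simp, rfl⟩
        · exact ⟨b, by simp, rfl⟩
        · exact ⟨c, by simp, rfl⟩
        · exact absurd rfl hj
      have k := Key d a b c hd
      rw [hanti a d, hanti b d, hanti c d] at k
      linear_combination -k
  · -- dependent case: all the F's vanish
    rw [linearIndependent_iff_notMem_span] at hind
    push_neg at hind
    obtain ⟨j, hj⟩ := hind
    have hall : ∀ x y, F x y = 0 := by
      intro x y
      apply det_zero_of_row_mem_span' _ (j : Fin N)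
      have hrow : ((M.updateRow p x).updateRow q y) (j : Fin N) = M j := by
        rw [Matrix.updateRow_ne j.2.2, Matrix.updateRow_ne j.2.1]
      rw [hrow]
      refine Submodule.span_mono ?_ hj
      rintro v ⟨i, hi, rfl⟩
      refine ⟨(i : Fin N), ?_, ?_⟩
      · intro h
        exact (by simpa using hi.2 : i ≠ j) (Subtype.ext h)
      · rw [Matrix.updateRow_ne i.2.2, Matrix.updateRow_ne i.2.1]
    rw [hall, hall, hall, hall, hall, hall]; ring

lemma pluecker_poly {N : ℕ} (M : Matrix (Fin N) (Fin N) (Polynomial ℂ))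
    (p q : Fin N) (hpq : p ≠ q) (a b c d : Fin N → Polynomial ℂ) :
    dF M p q a b * dF M p q c d - dF M p q a c * dF M p q b d
      + dF M p q a d * dF M p q b c = 0 := by
  set φ := algebraMap (Polynomial ℂ) (RatFunc ℂ) with hφ
  have hinj : Function.Injective φ := IsFractionRing.injective (Polynomial ℂ) (RatFunc ℂ)
  have hmapup : ∀ (A : Matrix (Fin N) (Fin N) (Polynomial ℂ)) (r : Fin N) (x : Fin N → Polynomial ℂ),
      (A.updateRow r x).map φ = (A.map φ).updateRow r (fun j => φ (x j)) := by
    intro A r x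
    ext i j
    by_cases h : i = r
    · subst h; simp [Matrix.updateRow_self]
    · simp [Matrix.updateRow_ne h, Matrix.map_apply]
  have hdF : ∀ x y, φ (dF M p q x y) = dF (M.map φ) p q (fun j => φ (x j)) (fun j => φ (y j)) := by
    intro x y
    rw [dF, dF, RingHom.map_det, RingHom.mapMatrix_apply, hmapup, hmapup]
  apply hinj
  simp only [map_add, map_sub, _root_.map_mul, map_zero, hdF]
  exact pluecker (M.map φ) p q hpq _ _ _ _

noncomputable def rowDet (N : ℕ) (g : Fin N → Polynomial ℂ) (f : Fin N → ℕ) : Polynomial ℂ :=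
  (Matrix.of fun i j => Polynomial.derivative^[f i] (g j)).det

def Jf (k x y : ℕ) : Fin (k + 2) → ℕ :=
  Fin.snoc (Fin.snoc (fun i : Fin k => (i : ℕ)) x) y

lemma Jf_cc (k x y : ℕ) (i : Fin k) : Jf k x y i.castSucc.castSucc = i := by
  simp [Jf]

lemma Jf_x (k x y : ℕ) : Jf k x y (Fin.last k).castSucc = x := by
  simp [Jf]

lemma Jf_y (k x y : ℕ) : Jf k x y (Fin.last (k + 1)) = y := by
  simp [Jf]

lemma Jf_id (k : ℕ) : Jf k k (k + 1) = fun i : Fin (k + 2) => (i : ℕ) := by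
  funext z
  induction z using Fin.lastCases with
  | last => simp [Jf_y]
  | cast w =>
    induction w using Fin.lastCases with
    | last => simp [Jf_x]
    | cast v => simp [Jf_cc]

lemma rowDet_dup {N : ℕ} (g : Fin N → Polynomial ℂ) (f : Fin N → ℕ) (i₁ i₂ : Fin N)
    (hne : i₁ ≠ i₂) (heq : f i₁ = f i₂) : rowDet N g f = 0 :=
  Matrix.det_zero_of_row_eq hne (by funext j; simp [Matrix.of_apply, heq])

lemma deriv_rowDet {N : ℕ} (g : Fin N → Polynomial ℂ) (f : Fin N → ℕ) :
    derivative (rowDet N g f) = ∑ p, rowDet N g (Function.update f p (f p + 1)) := by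
  rw [rowDet, deriv_det]
  refine Finset.sum_congr rfl fun p _ => ?_
  rw [rowDet]
  congr 1
  ext i j
  by_cases h : i = p
  · subst h
    simp [Matrix.updateRow_self, Function.update_self, Function.iterate_succ_apply']
  · simp [Matrix.updateRow_ne h, Function.update_of_ne h]

lemma deriv_rowDet_Jf (k y : ℕ) (g : Fin (k + 2) → Polynomial ℂ) :
    derivative (rowDet (k + 2) g (Jf k k y)) =
      (if y = k + 1 then 0 else rowDet (k + 2) g (Jf k (k + 1) y))
        + rowDet (k + 2) g (Jf k k (y + 1)) := by
  rw [deriv_rowDet, Fin.sum_univ_castSucc, Fin.sum_univ_castSucc]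
  have h1 : ∀ i : Fin k,
      rowDet (k + 2) g (Function.update (Jf k k y) i.castSucc.castSucc
        (Jf k k y i.castSucc.castSucc + 1)) = 0 := by
    intro i
    by_cases h : (i : ℕ) + 1 < k
    · refine rowDet_dup _ _ i.castSucc.castSucc (⟨(i : ℕ) + 1, h⟩ : Fin k).castSucc.castSucc
        (by simp [Fin.ext_iff]) ?_
      rw [Function.update_self, Function.update_of_ne (by simp [Fin.ext_iff]), Jf_cc, Jf_cc]
    · have hik : (i : ℕ) + 1 = k := by omega
      refine rowDet_dup _ _ i.castSucc.castSucc (Fin.last k).castSucc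
        (by simp [Fin.ext_iff]; omega) ?_
      rw [Function.update_self, Function.update_of_ne (by simp [Fin.ext_iff]; omega), Jf_cc, Jf_x,
        hik]
  rw [Finset.sum_congr rfl (fun i _ => h1 i), Finset.sum_const_zero, zero_add]
  congr 1
  · -- the x-slot term
    rw [Jf_x]
    by_cases hy : y = k + 1
    · rw [if_pos hy]
      refine rowDet_dup _ _ (Fin.last k).castSucc (Fin.last (k + 1))
        (by simp [Fin.ext_iff]) ?_
      rw [Function.update_self, Function.update_of_ne (by simp [Fin.ext_iff]), Jf_y, hy]
    · rw [if_neg hy]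
      congr 1
      funext z
      induction z using Fin.lastCases with
      | last => rw [Function.update_of_ne (by simp [Fin.ext_iff]), Jf_y, Jf_y]
      | cast w =>
        induction w using Fin.lastCases with
        | last => rw [Function.update_self, Jf_x]
        | cast v =>
          rw [Function.update_of_ne (by simp [Fin.ext_iff]; omega), Jf_cc, Jf_cc]
  · -- the y-slot term
    rw [Jf_y]
    congr 1
    funext z
    induction z using Fin.lastCases with
    | last => rw [Function.update_self, Jf_y]
    | cast w =>
      induction w using Fin.lastCases with
      | last => rw [Function.update_of_ne (by simp [Fin.ext_iff]), Jf_x, Jf_x]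
      | cast v => rw [Function.update_of_ne (by have := v.isLt; simp [Fin.ext_iff]; omega),
          Jf_cc, Jf_cc]

lemma Jf_lt {k x y : ℕ} {z : Fin (k + 2)} (h : (z : ℕ) < k) : Jf k x y z = z := by
  simp only [Jf, Fin.snoc]
  rw [dif_pos (by omega : (z : ℕ) < k + 1)]
  simp only [Fin.castLT]
  rw [dif_pos (by omega : (z : ℕ) < k)]
  simp

lemma Jf_keq {k x y : ℕ} {z : Fin (k + 2)} (h : (z : ℕ) = k) : Jf k x y z = x := by
  simp only [Jf, Fin.snoc]
  rw [dif_pos (by omega : (z : ℕ) < k + 1)]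
  simp only [Fin.castLT]
  rw [dif_neg (by omega)]
  simp

lemma Jf_k1eq {k x y : ℕ} {z : Fin (k + 2)} (h : (z : ℕ) = k + 1) : Jf k x y z = y := by
  simp only [Jf, Fin.snoc]
  rw [dif_neg (by omega)]
  simp

section AM
variable (m : ℕ) (ψ : Fin (m + 3) → Polynomial ℂ)

noncomputable def Bg (x y : ℕ) : Polynomial ℂ := rowDet (m + 3) ψ (Jf (m + 1) x y)
noncomputable def Sg (x y : ℕ) : Polynomial ℂ :=
  rowDet (m + 2) (fun j => ψ j.castSucc) (Jf m x y)

/-- the slotted big row-index function -/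
def bsf (t s : ℕ) : Fin (m + 3) → ℕ :=
  fun i => if (i : ℕ) = 1 then t else if (i : ℕ) = m + 2 then s else (i : ℕ)

/-- the slotted small row-index function -/
def ssf (u v : ℕ) : Fin (m + 2) → ℕ :=
  fun i => if (i : ℕ) = 0 then u else if (i : ℕ) = m + 1 then v else (i : ℕ) - 1

lemma bsf_one (y' : ℕ) : bsf m 1 y' = Jf (m + 1) (m + 1) y' := by
  funext z
  have hz := z.isLt
  rcases Nat.lt_trichotomy (z : ℕ) (m + 1) with h | h | h
  · rw [Jf_lt h]; simp only [bsf]; split_ifs <;> omega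
  · rw [Jf_keq h]; simp only [bsf]; split_ifs <;> omega
  · have h2 : (z : ℕ) = m + 2 := by omega
    rw [Jf_k1eq h2]; simp only [bsf]; split_ifs <;> omega

lemma iter2_zero (h1 : derivative (derivative (ψ 0)) = 0) :
    ∀ t, 2 ≤ t → derivative^[t] (ψ 0) = 0 := by
  intro t ht
  obtain ⟨s, rfl⟩ : ∃ s, t = s + 2 := ⟨t - 2, by omega⟩
  rw [Function.iterate_add_apply]
  have h2 : derivative^[2] (ψ 0) = 0 := by
    simp only [Function.iterate_succ_apply', Function.iterate_zero_apply]
    exact h1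
  rw [h2]
  exact Function.iterate_fixed (map_zero _) s

lemma conv (h1 : derivative (derivative (ψ 0)) = 0)
    (hrec : ∀ k : Fin (m + 2), derivative (derivative (ψ k.succ)) = ψ k.castSucc)
    (u v : ℕ) :
    rowDet (m + 3) ψ (bsf m (u + 2) (v + 2))
      = ψ 0 * rowDet (m + 2) (fun j => ψ j.castSucc) (ssf m u v) := by
  rw [rowDet, Matrix.det_succ_column_zero]
  rw [Finset.sum_eq_single 0]
  · -- the surviving term
    simp only [Matrix.of_apply, Fin.val_zero, pow_zero, one_mul]
    have h00 : bsf m (u + 2) (v + 2) 0 = 0 := by rw [bsf]; simp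
    rw [h00, Function.iterate_zero_apply]
    congr 1
    rw [rowDet]
    congr 1
    ext i' j'
    simp only [Matrix.submatrix_apply, Matrix.of_apply, Fin.succAbove_zero]
    have hshift : bsf m (u + 2) (v + 2) (Fin.succ i') = ssf m u v i' + 2 := by
      have hsv : ((Fin.succ i' : Fin (m + 3)) : ℕ) = (i' : ℕ) + 1 := rfl
      have := i'.isLt
      simp only [bsf, ssf, hsv]
      split_ifs <;> omega
    rw [hshift, Function.iterate_add_apply]
    congr 1
    have : derivative^[2] (ψ (Fin.succ j')) = ψ (Fin.castSucc j') := by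
      simp only [Function.iterate_succ_apply', Function.iterate_zero_apply]
      exact hrec j'
    rw [show ((Fin.succ j' : Fin (m+3))) = (j' : Fin (m+2)).succ from rfl, this]
  · -- other terms vanish
    intro i _ hi
    have h2 : 2 ≤ bsf m (u + 2) (v + 2) i := by
      have hv : (i : ℕ) ≠ 0 := fun h => hi (Fin.ext (by rw [h]; simp))
      simp only [bsf]
      split_ifs <;> omega
    simp only [Matrix.of_apply]
    rw [iter2_zero m ψ h1 _ h2]
    ring
  · intro h
    exact absurd (Finset.mem_univ _) h


lemma perm_small (u v : ℕ) :
    rowDet (m + 2) (fun j => ψ j.castSucc) (ssf m u v)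
      = (-1 : Polynomial ℂ) ^ m * rowDet (m + 2) (fun j => ψ j.castSucc) (Jf m u v) := by
  set c : Fin (m + 2) := ⟨m, by omega⟩ with hc
  set σ : Equiv.Perm (Fin (m + 2)) := (Fin.cycleRange c)⁻¹ with hσ
  have hval : ∀ i : Fin (m + 2), Jf m u v (σ i) = ssf m u v i := by
    intro i
    have hilt := i.isLt
    rcases Nat.lt_trichotomy (i : ℕ) (m + 1) with h | h | h
    · by_cases h0 : (i : ℕ) = 0
      · have hσi : σ i = c := by
          rw [hσ, Equiv.Perm.inv_eq_iff_eq, Fin.cycleRange_self]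
          exact Fin.ext (by rw [h0]; simp)
        rw [hσi, Jf_keq (by rw [hc]), ssf, if_pos h0]
      · have hσi : σ i = ⟨(i : ℕ) - 1, by omega⟩ := by
          rw [hσ, Equiv.Perm.inv_eq_iff_eq, Fin.cycleRange_of_lt (by
            rw [hc, Fin.lt_iff_val_lt_val]; simp; omega)]
          apply Fin.ext
          rw [Fin.val_add_one_of_lt (by
            rw [Fin.lt_iff_val_lt_val]; simp [Fin.last]; omega)]
          simp; omega
        rw [hσi, Jf_lt (by simp; omega), ssf, if_neg h0, if_neg (by omega)]
    · have hσi : σ i = i := by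
        rw [hσ, Equiv.Perm.inv_eq_iff_eq, Fin.cycleRange_of_gt (by
          rw [hc, Fin.lt_iff_val_lt_val]; simp; omega)]
      rw [hσi, Jf_k1eq (by omega), ssf, if_neg (by omega), if_pos h]
    · omega
  set N : Matrix (Fin (m + 2)) (Fin (m + 2)) (Polynomial ℂ) :=
    Matrix.of fun i j => derivative^[Jf m u v i] (ψ j.castSucc) with hN
  have step1 : rowDet (m + 2) (fun j => ψ j.castSucc) (ssf m u v)
      = (N.submatrix σ id).det := by
    rw [rowDet]
    congr 1
    ext i j
    rw [hN]
    simp only [Matrix.submatrix_apply, Matrix.of_apply, id]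
    rw [hval i]
  rw [step1, Matrix.det_permute σ N, hσ, map_inv, Fin.sign_cycleRange, hc, rowDet]
  norm_num
  rfl

lemma I2lem (h1 : derivative (derivative (ψ 0)) = 0)
    (hrec : ∀ k : Fin (m + 2), derivative (derivative (ψ k.succ)) = ψ k.castSucc)
    (hne : ψ 0 ≠ 0) :
    Bg m ψ (m + 1) (m + 4) * Sg m ψ m (m + 1)
      - Bg m ψ (m + 1) (m + 3) * Sg m ψ m (m + 2)
      + Bg m ψ (m + 1) (m + 2) * Sg m ψ (m + 1) (m + 2) = 0 := by
  set M0 : Matrix (Fin (m + 3)) (Fin (m + 3)) (Polynomial ℂ) :=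
    Matrix.of fun i j => derivative^[(i : ℕ)] (ψ j) with hM0
  set p : Fin (m + 3) := ⟨1, by omega⟩ with hp
  set q : Fin (m + 3) := Fin.last (m + 2) with hq
  have hpq : p ≠ q := by rw [hp, hq]; simp [Fin.ext_iff]
  have hrep : ∀ t s : ℕ,
      dF M0 p q (fun j => derivative^[t] (ψ j)) (fun j => derivative^[s] (ψ j))
        = rowDet (m + 3) ψ (bsf m t s) := by
    intro t s
    rw [dF, rowDet]
    congr 1
    ext i j
    by_cases hiq : i = q
    · subst hiq
      rw [Matrix.updateRow_self]
      simp only [Matrix.of_apply]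
      rw [bsf, if_neg (by rw [hq]; simp), if_pos (by rw [hq]; simp)]
    · rw [Matrix.updateRow_ne hiq]
      by_cases hip : i = p
      · subst hip
        rw [Matrix.updateRow_self]
        simp only [Matrix.of_apply]
        rw [bsf, if_pos (by rw [hp])]
      · rw [Matrix.updateRow_ne hip, hM0]
        simp only [Matrix.of_apply]
        rw [bsf, if_neg (by simpa [hp, Fin.ext_iff] using hip),
          if_neg (by simpa [hq, Fin.ext_iff, Fin.last] using hiq)]
  have PL := pluecker_poly M0 p q hpq (fun j => derivative^[1] (ψ j))
    (fun j => derivative^[m + 2] (ψ j)) (fun j => derivative^[m + 3] (ψ j))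
    (fun j => derivative^[m + 4] (ψ j))
  rw [hrep 1 (m + 2), hrep (m + 3) (m + 4), hrep 1 (m + 3), hrep (m + 2) (m + 4),
    hrep 1 (m + 4), hrep (m + 2) (m + 3)] at PL
  rw [bsf_one, bsf_one, bsf_one] at PL
  have hc1 := conv m ψ h1 hrec (m + 1) (m + 2)
  have hc2 := conv m ψ h1 hrec m (m + 2)
  have hc3 := conv m ψ h1 hrec m (m + 1)
  norm_num at hc1 hc2 hc3
  rw [hc1, hc2, hc3, perm_small, perm_small, perm_small] at PL
  have hfac : ((-1 : Polynomial ℂ) ^ m * ψ 0) *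
      (Bg m ψ (m + 1) (m + 4) * Sg m ψ m (m + 1)
        - Bg m ψ (m + 1) (m + 3) * Sg m ψ m (m + 2)
        + Bg m ψ (m + 1) (m + 2) * Sg m ψ (m + 1) (m + 2)) = 0 := by
    simp only [Bg, Sg]
    linear_combination PL
  rcases mul_eq_zero.mp hfac with h | h
  · exact absurd h (mul_ne_zero (pow_ne_zero _ (by norm_num)) hne)
  · exact h

end AM

lemma succAbove_val {n : ℕ} (p : Fin (n + 1)) (i' : Fin n) :
    ((p.succAbove i') : ℕ) = if (i' : ℕ) < (p : ℕ) then (i' : ℕ) else (i' : ℕ) + 1 := by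
  by_cases h : (i' : ℕ) < (p : ℕ)
  · rw [Fin.succAbove_of_castSucc_lt _ _ (by rw [Fin.lt_iff_val_lt_val]; simpa), if_pos h]
    simp
  · rw [Fin.succAbove_of_le_castSucc _ _ (by rw [Fin.le_iff_val_le_val]; simp; omega), if_neg h]
    simp

section AM
variable (m : ℕ) (ψ : Fin (m + 3) → Polynomial ℂ)

noncomputable def eRow (t : ℕ) : Polynomial ℂ :=
  rowDet (m + 2) (fun j => ψ j.castSucc) (Fin.snoc (fun i : Fin (m + 1) => (i : ℕ)) t)

lemma snoc_eq_Jf (t : ℕ) :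
    (Fin.snoc (fun i : Fin (m + 1) => (i : ℕ)) t : Fin (m + 2) → ℕ) = Jf m m t := by
  funext z
  induction z using Fin.lastCases with
  | last => rw [Fin.snoc_last, Jf_k1eq (by simp)]
  | cast w =>
    rw [Fin.snoc_castSucc]
    induction w using Fin.lastCases with
    | last => rw [Jf_keq (by simp)]; simp
    | cast v =>
      rw [Jf_lt (by simpa using v.isLt)]
      simp

lemma eRow_eq_Sg (t : ℕ) : eRow m ψ t = Sg m ψ m t := by
  rw [eRow, Sg, snoc_eq_Jf]

noncomputable def minorC (j : Fin (m + 2)) : Polynomial ℂ :=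
  (Matrix.of fun i' j' : Fin (m + 1) =>
    derivative^[(i' : ℕ)] (ψ ((j.succAbove j').castSucc))).det

lemma eRow_expand (t : ℕ) :
    eRow m ψ t = ∑ j : Fin (m + 2),
      (-1) ^ ((m + 1) + (j : ℕ)) * derivative^[t] (ψ j.castSucc) * minorC m ψ j := by
  rw [eRow, rowDet, Matrix.det_succ_row _ (Fin.last (m + 1))]
  refine Finset.sum_congr rfl fun j _ => ?_
  rw [Fin.val_last]
  congr 1
  · congr 1
    simp only [Matrix.of_apply, Fin.snoc_last]
  · rw [minorC]
    congr 1
    ext i' j'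
    simp only [Matrix.submatrix_apply, Matrix.of_apply, Fin.succAbove_last, Fin.snoc_castSucc]

noncomputable def Zm : Matrix (Fin (m + 4)) (Fin (m + 4)) (Polynomial ℂ) :=
  Matrix.of fun i j =>
    Fin.lastCases (eRow m ψ (i : ℕ)) (fun j' => derivative^[(i : ℕ)] (ψ j')) j

lemma Zm_cast (i : Fin (m + 4)) (j' : Fin (m + 3)) :
    Zm m ψ i j'.castSucc = derivative^[(i : ℕ)] (ψ j') := by
  simp [Zm]

lemma Zm_last (i : Fin (m + 4)) : Zm m ψ i (Fin.last (m + 3)) = eRow m ψ (i : ℕ) := by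
  simp [Zm]

lemma Zdet_zero : (Zm m ψ).det = 0 := by
  rw [← Matrix.det_transpose]
  set T := (Zm m ψ)ᵀ with hT
  set c : Fin (m + 4) → Polynomial ℂ := fun j =>
    if h : (j : ℕ) < m + 2 then (-1) ^ ((m + 1) + (j : ℕ)) * minorC m ψ ⟨j, h⟩ else 0 with hc
  have key : T (Fin.last (m + 3)) = ∑ j, c j • T j := by
    funext i
    have hTli : T (Fin.last (m + 3)) i = eRow m ψ (i : ℕ) := by
      rw [hT, Matrix.transpose_apply, Zm_last]
    have hR : ∑ j : Fin (m + 4), (c j • T j) i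
        = ∑ j₀ : Fin (m + 2),
            (-1 : Polynomial ℂ) ^ ((m + 1) + (j₀ : ℕ)) * minorC m ψ j₀
              * derivative^[(i : ℕ)] (ψ j₀.castSucc) := by
      rw [Fin.sum_univ_castSucc (f := fun j : Fin (m + 4) => (c j • T j) i)]
      rw [Fin.sum_univ_castSucc (f := fun j : Fin (m + 3) => (c j.castSucc • T j.castSucc) i)]
      have h1 : (c (Fin.last (m + 3)) • T (Fin.last (m + 3))) i = 0 := by
        rw [hc]; simp only [Fin.val_last]
        rw [dif_neg (by omega)]; simp
      have h2 : (c ((Fin.last (m + 2)).castSucc) • T ((Fin.last (m + 2)).castSucc)) i = 0 := by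
        rw [hc]; simp only [Fin.coe_castSucc, Fin.val_last]
        rw [dif_neg (by omega)]; simp
      rw [h1, h2, add_zero, add_zero]
      refine Finset.sum_congr rfl fun j₀ _ => ?_
      rw [Pi.smul_apply, smul_eq_mul, hT, Matrix.transpose_apply]
      rw [show (j₀.castSucc.castSucc : Fin (m + 4)) = ((j₀.castSucc : Fin (m + 3)).castSucc)
        from rfl, Zm_cast]
      rw [hc]
      simp only [Fin.coe_castSucc, Fin.eta]
      rw [dif_pos j₀.isLt]
    rw [Finset.sum_apply] at *
    rw [hTli, eRow_expand, hR]
    refine Finset.sum_congr rfl fun j₀ _ => ?_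
    ring
  have h2 := Matrix.det_updateRow_sum T (Fin.last (m + 3)) c
  rw [← key, Matrix.updateRow_eq_self] at h2
  have hclast : c (Fin.last (m + 3)) = 0 := dif_neg (by simp)
  rw [h2, hclast, zero_smul]

lemma I1lem :
    Sg m ψ m (m + 1) * Bg m ψ (m + 2) (m + 3) - Sg m ψ m (m + 2) * Bg m ψ (m + 1) (m + 3)
      + Sg m ψ m (m + 3) * Bg m ψ (m + 1) (m + 2) = 0 := by
  have expand := Matrix.det_succ_column (Zm m ψ) (Fin.last (m + 3))
  rw [Zdet_zero] at expand
  rw [Fin.sum_univ_castSucc, Fin.sum_univ_castSucc, Fin.sum_univ_castSucc] at expand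
  -- the minors as rowDets
  have hminor : ∀ a : Fin (m + 4),
      ((Zm m ψ).submatrix a.succAbove (Fin.last (m + 3)).succAbove).det
        = rowDet (m + 3) ψ (fun i' => ((a.succAbove i') : ℕ)) := by
    intro a
    rw [rowDet]
    congr 1
    ext i' j'
    rw [Matrix.submatrix_apply, Fin.succAbove_last, Zm_cast]
    simp
  have heR0 : ∀ t : ℕ, t ≤ m → eRow m ψ t = 0 := by
    intro t ht
    refine rowDet_dup _ _ ((⟨t, by omega⟩ : Fin (m + 1)).castSucc) (Fin.last (m + 1))
      (by simp [Fin.ext_iff]; omega) ?_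
    rw [Fin.snoc_castSucc, Fin.snoc_last]
  have hz : ∀ i₀ : Fin (m + 1), eRow m ψ (i₀ : ℕ) = 0 := fun i₀ => heR0 _ (by omega)
  simp only [Zm_last, Fin.coe_castSucc, Fin.val_last] at expand
  simp only [hminor] at expand
  simp only [hz, mul_zero, zero_mul, Finset.sum_const_zero, zero_add] at expand
  simp only [eRow_eq_Sg] at expand
  have hp1 : (((Fin.last (m + 1)).castSucc.castSucc : Fin (m + 4)) : ℕ) = m + 1 := by simp
  have hp2 : (((Fin.last (m + 2)).castSucc : Fin (m + 4)) : ℕ) = m + 2 := by simp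
  have hp3 : ((Fin.last (m + 3) : Fin (m + 4)) : ℕ) = m + 3 := by simp
  have hrow : ∀ (a : Fin (m + 4)) (x y : ℕ), m + 1 ≤ (a : ℕ) → (a : ℕ) ≤ m + 3 →
      x = (if (a : ℕ) = m + 1 then m + 2 else m + 1) →
      y = (if (a : ℕ) ≤ m + 2 then m + 3 else m + 2) →
      (fun i' : Fin (m + 3) => ((a.succAbove i') : ℕ)) = Jf (m + 1) x y := by
    intro a x y ha1 ha2 hx hy
    subst hx; subst hy
    funext i'
    have hi' := i'.isLt
    rw [succAbove_val]
    rcases Nat.lt_trichotomy (i' : ℕ) (m + 1) with h | h | h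
    · rw [Jf_lt h, if_pos (by omega)]
    · rw [Jf_keq h]; split_ifs <;> omega
    · have h2 : (i' : ℕ) = m + 2 := by omega
      rw [Jf_k1eq h2]; split_ifs <;> omega
  rw [hrow ((Fin.last (m + 1)).castSucc.castSucc) (m + 2) (m + 3) (by rw [hp1])
      (by rw [hp1]; omega) (by rw [hp1]; split_ifs <;> omega) (by rw [hp1]; split_ifs <;> omega),
    hrow ((Fin.last (m + 2)).castSucc) (m + 1) (m + 3) (by rw [hp2]; omega) (by rw [hp2]; omega)
      (by rw [hp2]; split_ifs <;> omega) (by rw [hp2]; split_ifs <;> omega),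
    hrow (Fin.last (m + 3)) (m + 1) (m + 2) (by rw [hp3]; omega) (by rw [hp3])
      (by rw [hp3]; split_ifs <;> omega) (by rw [hp3]; split_ifs <;> omega)] at expand
  have hBg : ∀ x y : ℕ, rowDet (m + 3) ψ (Jf (m + 1) x y) = Bg m ψ x y := fun _ _ => rfl
  simp only [hBg] at expand
  have hs1 : (-1 : Polynomial ℂ) ^ (m + 1 + (m + 3)) = 1 := Even.neg_one_pow ⟨m + 2, by ring⟩
  have hs2 : (-1 : Polynomial ℂ) ^ (m + 2 + (m + 3)) = -1 := Odd.neg_one_pow ⟨m + 2, by ring⟩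
  have hs3 : (-1 : Polynomial ℂ) ^ (m + 3 + (m + 3)) = 1 := Even.neg_one_pow ⟨m + 3, by ring⟩
  rw [hs1, hs2, hs3] at expand
  linear_combination -expand

end AM

section AM
variable (m : ℕ) (ψ : Fin (m + 3) → Polynomial ℂ)

lemma main_case (h1 : derivative (derivative (ψ 0)) = 0)
    (hne : ψ 0 ≠ 0)
    (hrec : ∀ k : Fin (m + 2), derivative (derivative (ψ k.succ)) = ψ k.castSucc) :
    derivative (derivative (wronskian ψ)) * wronskian (fun i : Fin (m + 2) => ψ i.castSucc)
      - 2 * derivative (wronskian ψ)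
          * derivative (wronskian (fun i : Fin (m + 2) => ψ i.castSucc))
      + wronskian ψ
          * derivative (derivative (wronskian (fun i : Fin (m + 2) => ψ i.castSucc))) = 0 := by
  have hwr : ∀ (l : ℕ) (p : Fin l → Polynomial ℂ),
      wronskian p = rowDet l p (fun i => (i : ℕ)) := fun _ _ => rfl
  have hBg : ∀ x y : ℕ, rowDet (m + 3) ψ (Jf (m + 1) x y) = Bg m ψ x y := fun _ _ => rfl
  have hSg : ∀ x y : ℕ, rowDet (m + 2) (fun j => ψ j.castSucc) (Jf m x y) = Sg m ψ x y :=
    fun _ _ => rfl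
  have hw1 : wronskian ψ = Bg m ψ (m + 1) (m + 2) := by
    have hJ := Jf_id (m + 1)
    norm_num at hJ
    rw [hwr]
    exact (congrArg (rowDet (m + 3) ψ) hJ).symm
  have hw2 : wronskian (fun i : Fin (m + 2) => ψ i.castSucc) = Sg m ψ m (m + 1) := by
    have hJ := Jf_id m
    rw [hwr]
    exact (congrArg (rowDet (m + 2) fun j => ψ j.castSucc) hJ).symm
  have hB1 : derivative (Bg m ψ (m + 1) (m + 2)) = Bg m ψ (m + 1) (m + 3) := by
    have h := deriv_rowDet_Jf (m + 1) (m + 2) ψ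
    rw [if_pos (by omega)] at h
    norm_num at h
    rw [← hBg, h, hBg]
    
  have hB2 : derivative (Bg m ψ (m + 1) (m + 3))
      = Bg m ψ (m + 2) (m + 3) + Bg m ψ (m + 1) (m + 4) := by
    have h := deriv_rowDet_Jf (m + 1) (m + 3) ψ
    rw [if_neg (by omega)] at h
    norm_num at h
    rw [← hBg, h, hBg, hBg]
  have hS1 : derivative (Sg m ψ m (m + 1)) = Sg m ψ m (m + 2) := by
    have h := deriv_rowDet_Jf m (m + 1) (fun j => ψ j.castSucc)
    rw [if_pos (by omega)] at h
    norm_num at h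
    rw [← hSg, h, hSg]
  have hS2 : derivative (Sg m ψ m (m + 2))
      = Sg m ψ (m + 1) (m + 2) + Sg m ψ m (m + 3) := by
    have h := deriv_rowDet_Jf m (m + 2) (fun j => ψ j.castSucc)
    rw [if_neg (by omega)] at h
    norm_num at h
    rw [← hSg, h, hSg, hSg]
  rw [hw1, hw2, hB1, hB2, hS1, hS2]
  linear_combination I1lem m ψ + I2lem m ψ h1 hrec hne

end AM

/-- **Adler–Moser Wronskians solve Tkachenko's bilinear equation.**
If `ψ 0, …, ψ n` (representing `ψ_1, …, ψ_{n+1}`) are polynomials with `ψ_1'' = 0`,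
`ψ_1 ≠ 0` and `ψ_k'' = ψ_{k-1}`, then the consecutive Wronskians
`Θ_n = W(ψ_1, …, ψ_n)` and `Θ_{n+1} = W(ψ_1, …, ψ_{n+1})` satisfy
`Θ_{n+1}'' Θ_n − 2 Θ_{n+1}' Θ_n' + Θ_{n+1} Θ_n'' = 0` identically.
In particular the Adler–Moser polynomials solve this equation. -/
theorem adlerMoser_bilinear (n : ℕ) (ψ : Fin (n + 1) → Polynomial ℂ)
    (h1 : Polynomial.derivative (Polynomial.derivative (ψ 0)) = 0)
    (hne : ψ 0 ≠ 0)
    (hrec : ∀ k : Fin n,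
      Polynomial.derivative (Polynomial.derivative (ψ k.succ)) = ψ k.castSucc)
    (Θn Θn1 : Polynomial ℂ)
    (hΘn : Θn = wronskian (fun i : Fin n => ψ i.castSucc))
    (hΘn1 : Θn1 = wronskian ψ) :
    Polynomial.derivative (Polynomial.derivative Θn1) * Θn
      - 2 * Polynomial.derivative Θn1 * Polynomial.derivative Θn
      + Θn1 * Polynomial.derivative (Polynomial.derivative Θn) = 0 := by
  subst hΘn hΘn1
  rcases n with _ | _ | m
  · have hw0 : wronskian (fun i : Fin 0 => ψ i.castSucc) = 1 := Matrix.det_fin_zero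
    have hw1 : wronskian ψ = ψ 0 := by
      rw [show wronskian ψ = (Matrix.of fun i j : Fin 1 =>
        (Polynomial.derivative^[(i : ℕ)] (ψ j))).det from rfl, Matrix.det_fin_one]
      simp
    rw [hw0, hw1]
    simp [h1]
  · have hw0 : wronskian (fun i : Fin 1 => ψ i.castSucc) = ψ 0 := by
      rw [show wronskian (fun i : Fin 1 => ψ i.castSucc) = (Matrix.of fun i j : Fin 1 =>
        (Polynomial.derivative^[(i : ℕ)] (ψ j.castSucc))).det from rfl, Matrix.det_fin_one]
      simp
    have hw1 : wronskian ψ = ψ 0 * derivative (ψ 1) - ψ 1 * derivative (ψ 0) := by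
      rw [show wronskian ψ = (Matrix.of fun i j : Fin 2 =>
        (Polynomial.derivative^[(i : ℕ)] (ψ j))).det from rfl, Matrix.det_fin_two]
      simp
    have hb : derivative (derivative (ψ 1)) = ψ 0 := hrec 0
    have e1 : derivative (ψ 0 * derivative (ψ 1) - ψ 1 * derivative (ψ 0)) = ψ 0 * ψ 0 := by
      simp only [derivative_sub, derivative_mul, h1, hb]
      ring
    rw [hw0, hw1, e1, derivative_mul, h1]
    ring
  · exact main_case m ψ h1 hne hrec
end

section
/- Let ψ_1, ψ_2, …, ψ_{n+1} be complex polynomials with ψ_1'' = 0, ψ_1 ≠ 0, and ψ_k'' = ψ_{k−1} for 2 ≤ k ≤ n+1, and set Θ_n = W(ψ_1, …, ψ_n), Θ_{n+1} = W(ψ_1, …, ψ_{n+1}). Then for every z ∈ ℂ with Θ_n(z) ≠ 0, the function φ = Θ_{n+1}/Θ_n satisfies the Schrödinger equation −φ''(z) + u(z) φ(z) = 0 with zero eigenvalue, where u = −2 (Θ_n'' Θ_n − (Θ_n')²)/Θ_n² (that is, u = −2 (d²/dz²) ln Θ_n). -/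
open Polynomial

section Helpers
open Matrix

open Polynomial Matrix

variable {R : Type*} [CommRing R]

/-- Expansion of `det (snoc a y)` along the last row. -/
lemma det_snoc_expand {N : ℕ} (a : Fin N → Fin (N + 1) → R) (y : Fin (N + 1) → R) :
    (Matrix.of (Fin.snoc a y)).det
      = ∑ j : Fin (N + 1),
          ((-1) ^ ((N : ℕ) + (j : ℕ)) * (Matrix.of fun i i' => a i (j.succAbove i')).det) * y j := by
  rw [Matrix.det_succ_row _ (Fin.last N)]
  refine Finset.sum_congr rfl fun j _ => ?_
  have h1 : (Matrix.of (Fin.snoc a y)) (Fin.last N) j = y j := by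
    simp [Fin.snoc_last]
  have h2 : ((Matrix.of (Fin.snoc a y)).submatrix (Fin.last N).succAbove j.succAbove)
      = Matrix.of fun i i' => a i (j.succAbove i') := by
    ext i i'
    simp [Matrix.submatrix_apply, Fin.succAbove_last, Fin.snoc_castSucc]
  rw [h1, h2, Fin.val_last]
  ring

/-- The basic (Grassmann–Plücker) relation for maximal minors. -/
lemma pluecker_s2 {N : ℕ} (a : Fin N → Fin (N + 1) → R) (c : Fin (N + 2) → Fin (N + 1) → R) :
    ∑ k : Fin (N + 2), (-1 : R) ^ (k : ℕ) * (Matrix.of (Fin.snoc a (c k))).det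
      * (Matrix.of (c ∘ k.succAbove)).det = 0 := by
  set L : Fin (N + 1) → R :=
    fun j => (-1) ^ ((N : ℕ) + (j : ℕ)) * (Matrix.of fun i i' => a i (j.succAbove i')).det with hL
  set Z : Matrix (Fin (N + 2)) (Fin (N + 2)) R :=
    Matrix.of (fun k => Fin.cons ((Matrix.of (Fin.snoc a (c k))).det) (c k)) with hZ
  have hdet : Z.det = ∑ k : Fin (N + 2), (-1 : R) ^ (k : ℕ)
      * (Matrix.of (Fin.snoc a (c k))).det * (Matrix.of (c ∘ k.succAbove)).det := by
    rw [Matrix.det_succ_column_zero]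
    refine Finset.sum_congr rfl fun k _ => ?_
    have h0 : Z k 0 = (Matrix.of (Fin.snoc a (c k))).det := rfl
    have h1 : Z.submatrix k.succAbove Fin.succ = Matrix.of (c ∘ k.succAbove) := by
      ext i j
      simp [hZ, Matrix.submatrix_apply]
    rw [h0, h1]
  have hzero : Z.det = 0 := by
    rw [← Matrix.det_transpose]
    have hrow : Zᵀ 0 = ∑ j : Fin (N + 1), L j • (Zᵀ (Fin.succ j)) := by
      funext k
      have : Zᵀ 0 k = (Matrix.of (Fin.snoc a (c k))).det := rfl
      rw [this, det_snoc_expand]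
      simp [hL, Finset.sum_apply, Matrix.transpose_apply, hZ, smul_eq_mul]
    have : Zᵀ.det = Matrix.detRowAlternating (Function.update Zᵀ 0 (Zᵀ 0)) := by
      exact (congrArg (fun f => Matrix.detRowAlternating f) (Function.update_eq_self (0 : Fin (N + 2)) (Zᵀ : Fin (N + 2) → Fin (N + 2) → R))).symm
    rw [this, hrow]
    have hs := (Matrix.detRowAlternating (R := R) (n := Fin (N + 2))).toMultilinearMap.map_update_sum
      Finset.univ 0 (fun j : Fin (N + 1) => L j • (Zᵀ (Fin.succ j))) Zᵀ
    rw [AlternatingMap.coe_multilinearMap] at hs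
    rw [hs]
    refine Finset.sum_eq_zero fun j _ => ?_
    have hsm := (Matrix.detRowAlternating (R := R) (n := Fin (N + 2))).toMultilinearMap.map_update_smul
      Zᵀ 0 (L j) (Zᵀ (Fin.succ j))
    rw [AlternatingMap.coe_multilinearMap] at hsm
    rw [hsm]
    have hz : Matrix.detRowAlternating (Function.update Zᵀ 0 (Zᵀ (Fin.succ j))) = 0 := by
      refine Matrix.detRowAlternating.map_eq_zero_of_eq _ (i := 0) (j := Fin.succ j) ?_
        (Fin.succ_ne_zero j).symm
      exact (Function.update_self _ _ _).trans (Function.update_of_ne (Fin.succ_ne_zero j) _ _).symm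
    rw [hz, smul_zero]
  rw [← hdet, hzero]

/-- Expanding along a last row equal to `Pi.single (last) 1` kills the last column. -/
lemma det_snoc_single_last {N : ℕ} (x : Fin N → Fin (N + 1) → R) :
    (Matrix.of (Fin.snoc x (Pi.single (Fin.last N) (1 : R)))).det
      = (Matrix.of fun i j => x i (Fin.castSucc j)).det := by
  rw [det_snoc_expand, Finset.sum_eq_single (Fin.last N)]
  · simp [Fin.succAbove_last]
  · intro j _ hj
    rw [Pi.single_eq_of_ne hj, mul_zero]
  · simp
/-- Expanding along a last row equal to `Pi.single 0 1`, when all other rows have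
zero first coordinate. -/
lemma det_snoc_single_zero {N : ℕ} (y : Fin N → Fin (N + 1) → R) (hy : ∀ i, y i 0 = 0) :
    (Matrix.of (Fin.snoc y (Pi.single (0 : Fin (N + 1)) (1 : R)))).det
      = (-1) ^ N * (Matrix.of fun i j => y i (Fin.succ j)).det := by
  rw [Matrix.det_succ_column_zero, Finset.sum_eq_single (Fin.last N)]
  · have h0 : (Matrix.of (Fin.snoc y (Pi.single (0 : Fin (N + 1)) (1 : R)))) (Fin.last N) 0
        = 1 := by simp [Fin.snoc_last]
    rw [h0, mul_one, Fin.val_last]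
    have hsub : (Matrix.of (Fin.snoc y (Pi.single (0 : Fin (N + 1)) (1 : R)))).submatrix
        (Fin.last N).succAbove Fin.succ = Matrix.of fun i j => y i (Fin.succ j) := by
      ext i j
      simp [Matrix.submatrix_apply, Fin.succAbove_last, Fin.snoc_castSucc]
    rw [hsub]
  · intro i _ hi
    obtain ⟨i', rfl⟩ := Fin.exists_castSucc_eq.mpr hi
    have : (Matrix.of (Fin.snoc y (Pi.single (0 : Fin (N + 1)) (1 : R)))) i'.castSucc 0 = 0 := by
      simp [Fin.snoc_castSucc, hy]
    rw [this, mul_zero, zero_mul]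
  · simp

lemma det_zero_col {N : ℕ} (y : Fin (N + 1) → Fin (N + 1) → R) (hy : ∀ i, y i 0 = 0) :
    (Matrix.of y).det = 0 :=
  Matrix.det_eq_zero_of_column_eq_zero 0 hy

open Finset in
lemma derivative_finset_prod {ι : Type*} [DecidableEq ι] (s : Finset ι) (f : ι → R[X]) :
    derivative (∏ i ∈ s, f i) = ∑ i ∈ s, (∏ j ∈ s.erase i, f j) * derivative (f i) := by
  classical
  induction s using Finset.induction_on with
  | empty => simp
  | insert a s' hx ih =>
    rw [Finset.prod_insert hx, derivative_mul, ih, Finset.sum_insert hx,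
      Finset.erase_insert hx, Finset.mul_sum]
    congr 1
    · exact mul_comm _ _
    · refine Finset.sum_congr rfl fun i hi => ?_
      rw [Finset.erase_insert_of_ne (by rintro rfl; exact hx hi), Finset.prod_insert
        (fun h => hx (Finset.mem_of_mem_erase h))]
      ring

lemma derivative_det_col {l : ℕ} (M : Matrix (Fin l) (Fin l) R[X]) :
    derivative M.det = ∑ j : Fin l, (M.updateCol j fun i => derivative (M i j)).det := by
  classical
  rw [Matrix.det_apply', map_sum]
  have hterm : ∀ σ : Equiv.Perm (Fin l),
      derivative (((Equiv.Perm.sign σ : ℤ) : R[X]) * ∏ i, M (σ i) i)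
        = ∑ j : Fin l, ((Equiv.Perm.sign σ : ℤ) : R[X])
            * ((∏ i ∈ Finset.univ.erase j, M (σ i) i) * derivative (M (σ j) j)) := by
    intro σ
    rw [derivative_mul, Polynomial.derivative_intCast, zero_mul, zero_add,
      derivative_finset_prod, Finset.mul_sum]
  rw [Finset.sum_congr rfl fun σ _ => hterm σ, Finset.sum_comm]
  refine Finset.sum_congr rfl fun j _ => ?_
  rw [Matrix.det_apply']
  refine Finset.sum_congr rfl fun σ _ => ?_
  have : ∏ i, M.updateCol j (fun i => derivative (M i j)) (σ i) i
      = derivative (M (σ j) j) * ∏ i ∈ Finset.univ.erase j, M (σ i) i := by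
    rw [← Finset.mul_prod_erase Finset.univ _ (Finset.mem_univ j)]
    congr 1
    · simp [Matrix.updateCol_apply]
    · refine Finset.prod_congr rfl fun i hi => ?_
      simp [Matrix.updateCol_apply, Finset.ne_of_mem_erase hi]
  rw [this]
  ring

lemma derivative_det_row {l : ℕ} (M : Matrix (Fin l) (Fin l) R[X]) :
    derivative M.det = ∑ i : Fin l, (M.updateRow i fun j => derivative (M i j)).det := by
  conv_lhs => rw [← Matrix.det_transpose M]
  rw [derivative_det_col]
  refine Finset.sum_congr rfl fun i _ => ?_
  rw [← Matrix.det_transpose (M.updateRow i fun j => derivative (M i j))]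
  congr 1
  rw [Matrix.updateCol_transpose]
  rfl

lemma det_snoc_dup {N : ℕ} (a : Fin N → Fin (N + 1) → R) (i : Fin N) :
    (Matrix.of (Fin.snoc a (a i))).det = 0 :=
  Matrix.det_zero_of_row_eq (Fin.ne_of_lt (Fin.castSucc_lt_last i))
    (by funext j; simp [Fin.snoc_castSucc, Fin.snoc_last])

lemma dc1 {k : ℕ} (p : ℕ → Fin (k + 1) → R[X])
    (hp : ∀ m j, derivative (p m j) = p (m + 1) j) :
    derivative (Matrix.of fun (i : Fin (k + 1)) (j : Fin (k + 1)) => p (i : ℕ) j).det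
      = (Matrix.of (Fin.snoc (fun i : Fin k => p (i : ℕ)) (p (k + 1)))).det := by
  rw [derivative_det_row, Finset.sum_eq_single (Fin.last k)]
  · congr 1
    ext i j
    rcases eq_or_ne i (Fin.last k) with h | h
    · subst h
      rw [Matrix.updateRow_self]
      simp [Fin.snoc_last, hp, Fin.val_last]
    · obtain ⟨i', rfl⟩ := Fin.exists_castSucc_eq.mpr h
      rw [Matrix.updateRow_ne h]
      simp [Fin.snoc_castSucc, Fin.coe_castSucc]
  · intro i _ hi
    have hlt : (i : ℕ) + 1 < k + 1 := by
      have := Fin.val_lt_last hi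
      omega
    set i1 : Fin (k + 1) := ⟨(i : ℕ) + 1, hlt⟩ with hi1
    refine Matrix.det_zero_of_row_eq (i := i) (j := i1) ?_ ?_
    · intro h
      have : (i : ℕ) = (i : ℕ) + 1 := congrArg Fin.val h
      omega
    · have h1 : i1 ≠ i := by
        intro h
        have : (i : ℕ) + 1 = (i : ℕ) := congrArg Fin.val h
        omega
      funext j
      rw [Matrix.updateRow_self, Matrix.updateRow_ne h1]
      simp [hp]
      rfl
  · simp

lemma dc2 {k : ℕ} (p : ℕ → Fin (k + 2) → R[X])
    (hp : ∀ m j, derivative (p m j) = p (m + 1) j) :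
    derivative (Matrix.of (Fin.snoc (fun i : Fin (k + 1) => p (i : ℕ)) (p (k + 2)))).det
      = (Matrix.of (Fin.snoc (fun i : Fin (k + 1) => p (i : ℕ)) (p (k + 3)))).det
        + (Matrix.of (Fin.snoc (Fin.snoc (fun i : Fin k => p (i : ℕ)) (p (k + 1)))
            (p (k + 2)))).det := by
  rw [derivative_det_row, Fin.sum_univ_castSucc, add_comm]
  congr 1
  · -- the `last` term
    congr 1
    ext i j
    rcases eq_or_ne i (Fin.last (k + 1)) with h | h
    · subst h
      rw [Matrix.updateRow_self]
      simp only [Matrix.of_apply, Fin.snoc_last, hp]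
    · obtain ⟨i', rfl⟩ := Fin.exists_castSucc_eq.mpr h
      rw [Matrix.updateRow_ne h]
      simp only [Matrix.of_apply, Fin.snoc_castSucc]
  · -- the castSucc sum: single survivor i' = last
    rw [Finset.sum_eq_single (Fin.last k)]
    · congr 1
      ext i j
      rcases eq_or_ne i ((Fin.last k).castSucc) with h | h
      · subst h
        rw [Matrix.updateRow_self]
        simp only [Matrix.of_apply, Fin.snoc_castSucc, Fin.snoc_last, hp, Fin.val_last]
      · rw [Matrix.updateRow_ne h]
        rcases eq_or_ne i (Fin.last (k + 1)) with h2 | h2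
        · subst h2
          simp only [Matrix.of_apply, Fin.snoc_last]
        · obtain ⟨i'', rfl⟩ := Fin.exists_castSucc_eq.mpr h2
          have h3 : i'' ≠ Fin.last k := fun hh => h (by rw [hh])
          obtain ⟨i3, rfl⟩ := Fin.exists_castSucc_eq.mpr h3
          simp only [Matrix.of_apply, Fin.snoc_castSucc, Fin.coe_castSucc]
    · intro i' _ hi'
      have hlt : (i' : ℕ) + 1 < k + 1 := by
        have := Fin.val_lt_last hi'
        omega
      set i1 : Fin (k + 1) := ⟨(i' : ℕ) + 1, hlt⟩ with hi1
      refine Matrix.det_zero_of_row_eq (i := i'.castSucc) (j := i1.castSucc) ?_ ?_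
      · intro h
        have : (i' : ℕ) = (i' : ℕ) + 1 := congrArg Fin.val h
        omega
      · have h1 : i1.castSucc ≠ i'.castSucc := by
          intro h
          have : (i' : ℕ) + 1 = (i' : ℕ) := congrArg Fin.val h
          omega
        funext j
        rw [Matrix.updateRow_self, Matrix.updateRow_ne h1]
        simp only [Matrix.of_apply, Fin.snoc_castSucc, hp]
        rfl
    · simp

lemma snoc_comp_succAbove {s : ℕ} {α : Sort*} (f : Fin (s + 1) → α) (y : α) (k : Fin (s + 1)) :
    (Fin.snoc f y : Fin (s + 2) → α) ∘ (Fin.castSucc k).succAbove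
      = Fin.snoc (f ∘ k.succAbove) y := by
  funext i
  refine Fin.lastCases ?_ (fun i' => ?_) i
  · have h : (Fin.castSucc k).succAbove (Fin.last s) = Fin.last (s + 1) := by
      rw [Fin.succAbove_of_le_castSucc _ _ (by
        simpa using Fin.le_last k), Fin.succ_last]
    simp [Function.comp_apply, h, Fin.snoc_last]
  · simp [Function.comp_apply, Fin.castSucc_succAbove_castSucc, Fin.snoc_castSucc]

lemma snoc_nat {α : Sort*} (g : ℕ → α) (s : ℕ) :
    (Fin.snoc (fun i : Fin s => g (i : ℕ)) (g s) : Fin (s + 1) → α) = fun i : Fin (s + 1) => g (i : ℕ) := by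
  funext i
  refine Fin.lastCases ?_ (fun i' => ?_) i
  · simp [Fin.snoc_last]
  · simp [Fin.snoc_castSucc]

lemma det_snoc_snoc_single_last {s : ℕ} (f : Fin s → Fin (s + 2) → R) (y : Fin (s + 2) → R) :
    (Matrix.of (Fin.snoc (Fin.snoc f y) (Pi.single (Fin.last (s + 1)) (1 : R)))).det
      = (Matrix.of (Fin.snoc (fun i j => f i (Fin.castSucc j))
          (fun j => y (Fin.castSucc j)))).det := by
  rw [det_snoc_single_last]
  congr 1
  show Matrix.of ((· ∘ Fin.castSucc) ∘ Fin.snoc f y) = _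
  rw [Fin.comp_snoc]
  rfl

lemma det_snoc3_single_zero {s : ℕ} (f : Fin s → Fin (s + 3) → R) (x y : Fin (s + 3) → R)
    (hf : ∀ i, f i 0 = 0) (hx : x 0 = 0) (hy : y 0 = 0) :
    (Matrix.of (Fin.snoc (Fin.snoc (Fin.snoc f x) y) (Pi.single (0 : Fin (s + 3)) (1 : R)))).det
      = (-1) ^ (s + 2) * (Matrix.of (Fin.snoc (Fin.snoc (fun i j => f i (Fin.succ j))
          (fun j => x (Fin.succ j))) (fun j => y (Fin.succ j)))).det := by
  rw [det_snoc_single_zero]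
  · congr 2
    show Matrix.of ((· ∘ Fin.succ) ∘ (Fin.snoc (Fin.snoc f x) y)) = _
    rw [Fin.comp_snoc, Fin.comp_snoc]
    rfl
  · intro i
    refine Fin.lastCases ?_ (fun i1 => ?_) i
    · simpa [Fin.snoc_last] using hy
    · refine Fin.lastCases ?_ (fun i2 => ?_) i1
      · simpa [Fin.snoc_castSucc, Fin.snoc_last] using hx
      · simpa [Fin.snoc_castSucc] using hf i2
variable [IsDomain R]

lemma pluecker_collapse3 {s : ℕ} (a : Fin (s + 1) → Fin (s + 2) → R) (e : Fin s → Fin (s + 1))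
    (x y z : Fin (s + 2) → R) :
    (Matrix.of (Fin.snoc a x)).det * (Matrix.of (Fin.snoc (Fin.snoc (a ∘ e) y) z)).det
      - (Matrix.of (Fin.snoc a y)).det * (Matrix.of (Fin.snoc (Fin.snoc (a ∘ e) x) z)).det
      + (Matrix.of (Fin.snoc a z)).det * (Matrix.of (Fin.snoc (Fin.snoc (a ∘ e) x) y)).det
        = 0 := by
  have hp := pluecker_s2 a (Fin.snoc (Fin.snoc (Fin.snoc (a ∘ e) x) y) z)
  rw [Fin.sum_univ_castSucc, Fin.sum_univ_castSucc, Fin.sum_univ_castSucc] at hp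
  simp only [Fin.snoc_castSucc, Fin.snoc_last, Fin.coe_castSucc, Fin.val_last,
    Function.comp_apply, snoc_comp_succAbove, Fin.succAbove_last, Fin.snoc_comp_castSucc,
    det_snoc_dup, mul_zero, zero_mul, Finset.sum_const_zero, zero_add] at hp
  set ε : R := (-1 : R) with hε
  have h2 : ε ^ s * ((Matrix.of (Fin.snoc a x)).det
        * (Matrix.of (Fin.snoc (Fin.snoc (a ∘ e) y) z)).det
      - (Matrix.of (Fin.snoc a y)).det * (Matrix.of (Fin.snoc (Fin.snoc (a ∘ e) x) z)).det
      + (Matrix.of (Fin.snoc a z)).det * (Matrix.of (Fin.snoc (Fin.snoc (a ∘ e) x) y)).det)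
        = 0 := by linear_combination hp
  have hne : ε ^ s ≠ 0 := pow_ne_zero _ (by rw [hε]; exact neg_ne_zero.mpr one_ne_zero)
  exact (mul_eq_zero.mp h2).resolve_left hne

lemma pluecker_collapse4 {s : ℕ} (a : Fin (s + 2) → Fin (s + 3) → R) (e : Fin s → Fin (s + 2))
    (x y z w : Fin (s + 3) → R) :
    (Matrix.of (Fin.snoc a x)).det
        * (Matrix.of (Fin.snoc (Fin.snoc (Fin.snoc (a ∘ e) y) z) w)).det
      - (Matrix.of (Fin.snoc a y)).det
        * (Matrix.of (Fin.snoc (Fin.snoc (Fin.snoc (a ∘ e) x) z) w)).det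
      + (Matrix.of (Fin.snoc a z)).det
        * (Matrix.of (Fin.snoc (Fin.snoc (Fin.snoc (a ∘ e) x) y) w)).det
      - (Matrix.of (Fin.snoc a w)).det
        * (Matrix.of (Fin.snoc (Fin.snoc (Fin.snoc (a ∘ e) x) y) z)).det = 0 := by
  have hp := pluecker_s2 a (Fin.snoc (Fin.snoc (Fin.snoc (Fin.snoc (a ∘ e) x) y) z) w)
  rw [Fin.sum_univ_castSucc, Fin.sum_univ_castSucc, Fin.sum_univ_castSucc,
    Fin.sum_univ_castSucc] at hp
  simp only [Fin.snoc_castSucc, Fin.snoc_last, Fin.coe_castSucc, Fin.val_last,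
    Function.comp_apply, snoc_comp_succAbove, Fin.succAbove_last, Fin.snoc_comp_castSucc,
    det_snoc_dup, mul_zero, zero_mul, Finset.sum_const_zero, zero_add] at hp
  set ε : R := (-1 : R) with hε
  have h2 : ε ^ s * ((Matrix.of (Fin.snoc a x)).det
        * (Matrix.of (Fin.snoc (Fin.snoc (Fin.snoc (a ∘ e) y) z) w)).det
      - (Matrix.of (Fin.snoc a y)).det
        * (Matrix.of (Fin.snoc (Fin.snoc (Fin.snoc (a ∘ e) x) z) w)).det
      + (Matrix.of (Fin.snoc a z)).det
        * (Matrix.of (Fin.snoc (Fin.snoc (Fin.snoc (a ∘ e) x) y) w)).det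
      - (Matrix.of (Fin.snoc a w)).det
        * (Matrix.of (Fin.snoc (Fin.snoc (Fin.snoc (a ∘ e) x) y) z)).det) = 0 := by
    linear_combination hp
  have hne : ε ^ s ≠ 0 := pow_ne_zero _ (by rw [hε]; exact neg_ne_zero.mpr one_ne_zero)
  exact (mul_eq_zero.mp h2).resolve_left hne

end Helpers

lemma schroedinger_reduce (P Q : Polynomial ℂ)
    (hB : derivative (derivative P) * Q - 2 * derivative P * derivative Q
        + P * derivative (derivative Q) = 0) :
    ∀ z : ℂ, Q.eval z ≠ 0 →
      - deriv (deriv (fun w : ℂ => P.eval w / Q.eval w)) z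
        + (-2 * ((derivative (derivative Q) * Q - (derivative Q) ^ 2).eval z) / (Q.eval z) ^ 2)
          * (P.eval z / Q.eval z) = 0 := by
  intro z hz
  have hopen : ∀ᶠ w in nhds z, Q.eval w ≠ 0 :=
    (Q.continuous.continuousAt).eventually_ne hz
  have hd1 : deriv (fun w => P.eval w / Q.eval w) =ᶠ[nhds z]
      fun w => ((derivative P * Q - P * derivative Q).eval w) / ((Q ^ 2).eval w) := by
    filter_upwards [hopen] with w hw
    have h1 := (P.hasDerivAt (x := w)).div (Q.hasDerivAt (x := w)) hw
    rw [show deriv (fun w => P.eval w / Q.eval w) w = _ from h1.deriv]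
    simp [eval_mul, eval_sub, eval_pow]
  have hd2 : deriv (deriv (fun w => P.eval w / Q.eval w)) z
      = deriv (fun w => ((derivative P * Q - P * derivative Q).eval w) / ((Q ^ 2).eval w)) z :=
    hd1.deriv_eq
  have hq2 : (Q ^ 2).eval z ≠ 0 := by
    simp only [eval_pow]
    exact pow_ne_zero _ hz
  have h2 := (((derivative P * Q - P * derivative Q).hasDerivAt (x := z)).div
      ((Q ^ 2).hasDerivAt (x := z)) hq2).deriv
  rw [hd2, show deriv (fun w => ((derivative P * Q - P * derivative Q).eval w) / ((Q ^ 2).eval w)) z = _ from h2]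
  have hBz := congrArg (Polynomial.eval z) hB
  simp only [eval_add, eval_sub, eval_mul, eval_pow, eval_ofNat, eval_zero] at hBz
  simp only [derivative_mul, derivative_sub, derivative_pow, eval_add, eval_sub, eval_mul,
    eval_pow, eval_ofNat, eval_C, Nat.cast_ofNat, Nat.add_sub_cancel, pow_one]
  field_simp
  ring_nf
  ring_nf at hBz
  linear_combination (-(Q.eval z) ^ 2) * hBz

theorem keyB (n : ℕ) (ψ : Fin (n + 1) → Polynomial ℂ)
    (h1 : derivative (derivative (ψ 0)) = 0)
    (hrec : ∀ k : Fin n, derivative (derivative (ψ k.succ)) = ψ k.castSucc) :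
    derivative (derivative (wronskian ψ)) * (wronskian fun i : Fin n => ψ i.castSucc)
      - 2 * derivative (wronskian ψ) * derivative (wronskian fun i : Fin n => ψ i.castSucc)
      + wronskian ψ * derivative (derivative (wronskian fun i : Fin n => ψ i.castSucc)) = 0 := by
  rcases n with _ | n
  · -- n = 0
    have e0 : (wronskian fun i : Fin 0 => ψ i.castSucc) = 1 := Matrix.det_fin_zero
    have e1 : wronskian ψ = ψ 0 := by
      show (Matrix.of fun i j : Fin 1 => (derivative^[(i : ℕ)] (ψ j))).det = ψ 0
      rw [Matrix.det_fin_one]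
      norm_num
    rw [e0, e1, h1]
    simp
  rcases n with _ | m
  · -- n = 1
    have e0 : (wronskian fun i : Fin 1 => ψ i.castSucc) = ψ 0 := by
      show (Matrix.of fun i j : Fin 1 => (derivative^[(i : ℕ)] (ψ ((fun i : Fin 1 => i.castSucc) j)))).det = ψ 0
      rw [Matrix.det_fin_one]
      norm_num
    have e1 : wronskian ψ = ψ 0 * derivative (ψ 1) - ψ 1 * derivative (ψ 0) := by
      show (Matrix.of fun i j : Fin 2 => (derivative^[(i : ℕ)] (ψ j))).det = _
      rw [Matrix.det_fin_two]
      norm_num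
    have h10 : derivative (derivative (ψ 1)) = ψ 0 := by
      have h := hrec 0
      norm_num at h
      exact h
    have h3 : derivative (derivative (derivative (ψ 1))) = derivative (ψ 0) := by
      rw [h10]
    rw [e0, e1]
    simp only [derivative_mul, derivative_sub, derivative_add]
    rw [h1, h10]
    simp only [derivative_zero]
    ring
  · -- n = m + 2
    have h2it : ∀ q : Polynomial ℂ, derivative^[2] q = derivative (derivative q) := fun q => rfl
    set v : ℕ → Fin (m + 3) → Polynomial ℂ := fun r j => derivative^[r] (ψ j) with hv
    set t : ℕ → Fin (m + 2) → Polynomial ℂ := fun r j => derivative^[r] (ψ j.castSucc) with ht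
    have hvd : ∀ (r : ℕ) (j : Fin (m + 3)), derivative (v r j) = v (r + 1) j := fun r j =>
      (Function.iterate_succ_apply' derivative r (ψ j)).symm
    have htd : ∀ (r : ℕ) (j : Fin (m + 2)), derivative (t r j) = t (r + 1) j := fun r j =>
      (Function.iterate_succ_apply' derivative r (ψ j.castSucc)).symm
    have hv0 : ∀ r : ℕ, v (r + 2) (0 : Fin (m + 3)) = 0 := by
      intro r
      show derivative^[r + 2] (ψ 0) = 0
      rw [Function.iterate_add_apply, h2it, h1]
      exact Function.iterate_fixed derivative_zero r
    have hvs : ∀ (r : ℕ) (j : Fin (m + 2)), v (r + 2) j.succ = t r j := by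
      intro r j
      show derivative^[r + 2] (ψ j.succ) = derivative^[r] (ψ j.castSucc)
      rw [Function.iterate_add_apply, h2it, hrec j]
    have hW1 : wronskian ψ = (Matrix.of fun i j : Fin (m + 3) => v (i : ℕ) j).det := rfl
    have hW0 : (wronskian fun i : Fin (m + 1 + 1) => ψ i.castSucc)
        = (Matrix.of fun i j : Fin (m + 2) => t (i : ℕ) j).det := rfl
    have hd1 : derivative (wronskian ψ)
        = (Matrix.of (Fin.snoc (fun i : Fin (m + 2) => v (i : ℕ)) (v (m + 3)))).det := by
      rw [hW1]; exact dc1 v hvd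
    have hd2 : derivative (derivative (wronskian ψ))
        = (Matrix.of (Fin.snoc (fun i : Fin (m + 2) => v (i : ℕ)) (v (m + 4)))).det
          + (Matrix.of (Fin.snoc (Fin.snoc (fun i : Fin (m + 1) => v (i : ℕ)) (v (m + 2)))
              (v (m + 3)))).det := by
      rw [hd1]; exact dc2 v hvd
    have he1 : derivative (wronskian fun i : Fin (m + 1 + 1) => ψ i.castSucc)
        = (Matrix.of (Fin.snoc (fun i : Fin (m + 1) => t (i : ℕ)) (t (m + 2)))).det := by
      rw [hW0]; exact dc1 t htd
    have he2 : derivative (derivative (wronskian fun i : Fin (m + 1 + 1) => ψ i.castSucc))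
        = (Matrix.of (Fin.snoc (fun i : Fin (m + 1) => t (i : ℕ)) (t (m + 3)))).det
          + (Matrix.of (Fin.snoc (Fin.snoc (fun i : Fin m => t (i : ℕ)) (t (m + 1)))
              (t (m + 2)))).det := by
      rw [he1]; exact dc2 t htd
    -- conversions
    have cW1 : (Matrix.of (Fin.snoc (fun i : Fin (m + 2) => v (i : ℕ)) (v (m + 2)))).det
        = (Matrix.of fun i j : Fin (m + 3) => v (i : ℕ) j).det := by
      rw [snoc_nat v (m + 2)]
    have cW0 : (Matrix.of (Fin.snoc (fun i : Fin (m + 2) => v (i : ℕ))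
          (Pi.single (Fin.last (m + 2)) 1))).det
        = (Matrix.of fun i j : Fin (m + 2) => t (i : ℕ) j).det := by
      rw [det_snoc_single_last]
    have cD1 : (Matrix.of (Fin.snoc (Fin.snoc (fun i : Fin (m + 1) => v (i : ℕ)) (v (m + 2)))
          (Pi.single (Fin.last (m + 2)) 1))).det
        = (Matrix.of (Fin.snoc (fun i : Fin (m + 1) => t (i : ℕ)) (t (m + 2)))).det := by
      rw [det_snoc_snoc_single_last]
    have cD2 : (Matrix.of (Fin.snoc (Fin.snoc (fun i : Fin (m + 1) => v (i : ℕ)) (v (m + 3)))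
          (Pi.single (Fin.last (m + 2)) 1))).det
        = (Matrix.of (Fin.snoc (fun i : Fin (m + 1) => t (i : ℕ)) (t (m + 3)))).det := by
      rw [det_snoc_snoc_single_last]
    -- Plücker instance 1
    have hacs : (fun i : Fin (m + 2) => v (i : ℕ)) ∘ Fin.castSucc
        = fun i : Fin (m + 1) => v (i : ℕ) := rfl
    have hp1 := pluecker_collapse3 (fun i : Fin (m + 2) => v (i : ℕ)) Fin.castSucc
      (v (m + 2)) (v (m + 3)) (Pi.single (Fin.last (m + 2)) 1)
    rw [hacs, cW1, cW0, cD1, cD2] at hp1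
    -- Plücker instance 2
    have hae : (fun i : Fin (m + 2) => v (i : ℕ)) ∘ (fun i : Fin m => i.succ.succ)
        = fun i : Fin m => v ((i : ℕ) + 2) := rfl
    have hps0 : (fun (i : Fin m) (j : Fin (m + 2)) => v ((i : ℕ) + 2) (Fin.succ j))
        = fun i : Fin m => t (i : ℕ) := by
      funext i j; exact hvs _ j
    have hps1 : (fun j : Fin (m + 2) => v (m + 2) (Fin.succ j)) = t m := by
      funext j; exact hvs m j
    have hps2 : (fun j : Fin (m + 2) => v (m + 3) (Fin.succ j)) = t (m + 1) := by
      funext j; exact hvs (m + 1) j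
    have hps3 : (fun j : Fin (m + 2) => v (m + 4) (Fin.succ j)) = t (m + 2) := by
      funext j; exact hvs (m + 2) j
    have hz0 : ∀ i : Fin m, v ((i : ℕ) + 2) (0 : Fin (m + 3)) = 0 := fun i => hv0 i
    have cz : (Matrix.of (Fin.snoc (Fin.snoc (Fin.snoc (fun i : Fin m => v ((i : ℕ) + 2))
          (v (m + 2))) (v (m + 3))) (v (m + 4)))).det = 0 := by
      apply det_zero_col
      intro i
      refine Fin.lastCases ?_ (fun i1 => ?_) i
      · simpa [Fin.snoc_last] using hv0 (m + 2)
      · refine Fin.lastCases ?_ (fun i2 => ?_) i1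
        · simpa [Fin.snoc_castSucc, Fin.snoc_last] using hv0 (m + 1)
        · refine Fin.lastCases ?_ (fun i3 => ?_) i2
          · simpa [Fin.snoc_castSucc, Fin.snoc_last] using hv0 m
          · simpa [Fin.snoc_castSucc] using hz0 i3
    have cS1 : (Matrix.of (Fin.snoc (Fin.snoc (Fin.snoc (fun i : Fin m => v ((i : ℕ) + 2))
          (v (m + 3))) (v (m + 4))) (Pi.single (0 : Fin (m + 3)) 1))).det
        = (-1) ^ (m + 2) * (Matrix.of (Fin.snoc (Fin.snoc (fun i : Fin m => t (i : ℕ))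
            (t (m + 1))) (t (m + 2)))).det := by
      rw [det_snoc3_single_zero _ _ _ hz0 (hv0 (m + 1)) (hv0 (m + 2))]
      rw [hps0, hps2, hps3]
    have cS2 : (Matrix.of (Fin.snoc (Fin.snoc (Fin.snoc (fun i : Fin m => v ((i : ℕ) + 2))
          (v (m + 2))) (v (m + 4))) (Pi.single (0 : Fin (m + 3)) 1))).det
        = (-1) ^ (m + 2) * (Matrix.of (Fin.snoc (fun i : Fin (m + 1) => t (i : ℕ))
            (t (m + 2)))).det := by
      rw [det_snoc3_single_zero _ _ _ hz0 (hv0 m) (hv0 (m + 2))]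
      rw [hps0, hps1, hps3, snoc_nat t m]
    have cS3 : (Matrix.of (Fin.snoc (Fin.snoc (Fin.snoc (fun i : Fin m => v ((i : ℕ) + 2))
          (v (m + 2))) (v (m + 3))) (Pi.single (0 : Fin (m + 3)) 1))).det
        = (-1) ^ (m + 2) * (Matrix.of fun i j : Fin (m + 2) => t (i : ℕ) j).det := by
      rw [det_snoc3_single_zero _ _ _ hz0 (hv0 m) (hv0 (m + 1))]
      rw [hps0, hps1, hps2, snoc_nat t m, snoc_nat t (m + 1)]
    have hp2 := pluecker_collapse4 (fun i : Fin (m + 2) => v (i : ℕ))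
      (fun i : Fin m => i.succ.succ) (v (m + 2)) (v (m + 3)) (v (m + 4))
      (Pi.single (0 : Fin (m + 3)) 1)
    rw [hae, cW1, cz, cS1, cS2, cS3, mul_zero, sub_zero] at hp2
    generalize hc : ((-1 : Polynomial ℂ)) ^ (m + 2) = c at hp2
    have hcne : c ≠ 0 := by
      rw [← hc]
      exact pow_ne_zero _ (neg_ne_zero.mpr one_ne_zero)
    have hp2' : (Matrix.of fun i j : Fin (m + 3) => v (i : ℕ) j).det
          * (Matrix.of (Fin.snoc (Fin.snoc (fun i : Fin m => t (i : ℕ)) (t (m + 1)))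
              (t (m + 2)))).det
        - (Matrix.of (Fin.snoc (fun i : Fin (m + 2) => v (i : ℕ)) (v (m + 3)))).det
          * (Matrix.of (Fin.snoc (fun i : Fin (m + 1) => t (i : ℕ)) (t (m + 2)))).det
        + (Matrix.of (Fin.snoc (fun i : Fin (m + 2) => v (i : ℕ)) (v (m + 4)))).det
          * (Matrix.of fun i j : Fin (m + 2) => t (i : ℕ) j).det = 0 := by
      have h2 : c * ((Matrix.of fun i j : Fin (m + 3) => v (i : ℕ) j).det
          * (Matrix.of (Fin.snoc (Fin.snoc (fun i : Fin m => t (i : ℕ)) (t (m + 1)))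
              (t (m + 2)))).det
        - (Matrix.of (Fin.snoc (fun i : Fin (m + 2) => v (i : ℕ)) (v (m + 3)))).det
          * (Matrix.of (Fin.snoc (fun i : Fin (m + 1) => t (i : ℕ)) (t (m + 2)))).det
        + (Matrix.of (Fin.snoc (fun i : Fin (m + 2) => v (i : ℕ)) (v (m + 4)))).det
          * (Matrix.of fun i j : Fin (m + 2) => t (i : ℕ) j).det) = 0 := by
        linear_combination hp2
      exact (mul_eq_zero.mp h2).resolve_left hcne
    rw [hd2, he2, hd1, he1, hW1, hW0]
    linear_combination hp1 + hp2'


/-- **Ratios of consecutive Adler–Moser Wronskians are zero-energy eigenstates.**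
With `ψ_1'' = 0`, `ψ_1 ≠ 0`, `ψ_k'' = ψ_{k-1}`, `Θ_n = W(ψ_1, …, ψ_n)` and
`Θ_{n+1} = W(ψ_1, …, ψ_{n+1})`, the function `φ = Θ_{n+1}/Θ_n` satisfies the
Schrödinger equation `−φ'' + u φ = 0` with potential
`u = −2 (Θ_n'' Θ_n − (Θ_n')²)/Θ_n² = −2 (ln Θ_n)''` wherever `Θ_n ≠ 0`. -/
theorem adlerMoser_schroedinger (n : ℕ) (ψ : Fin (n + 1) → Polynomial ℂ)
    (h1 : Polynomial.derivative (Polynomial.derivative (ψ 0)) = 0)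
    (hne : ψ 0 ≠ 0)
    (hrec : ∀ k : Fin n,
      Polynomial.derivative (Polynomial.derivative (ψ k.succ)) = ψ k.castSucc)
    (Θn Θn1 : Polynomial ℂ)
    (hΘn : Θn = wronskian (fun i : Fin n => ψ i.castSucc))
    (hΘn1 : Θn1 = wronskian ψ) :
    ∀ z : ℂ, Θn.eval z ≠ 0 →
      - deriv (deriv (fun w : ℂ => Θn1.eval w / Θn.eval w)) z
        + (-2 * ((Polynomial.derivative (Polynomial.derivative Θn) * Θn
              - (Polynomial.derivative Θn) ^ 2).eval z) / (Θn.eval z) ^ 2)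
          * (Θn1.eval z / Θn.eval z) = 0 := by
  subst hΘn hΘn1
  exact schroedinger_reduce _ _ (keyB n ψ h1 hrec)
end

section
/- Suppose P and Q are nonzero complex polynomials, of degrees j and k respectively, satisfying the bilinear equation P''Q − 2P'Q' + PQ'' = 0 identically. Then (j − k)² = j + k; equivalently, there exists an integer d (namely d = j − k) such that j = d(d+1)/2 and k = d(d−1)/2, so the degrees of P and Q are two successive triangular numbers. -/
open Polynomial

lemma aux_dd_mul (p q : Polynomial ℂ) :
    (Polynomial.derivative (Polynomial.derivative p) * q).coeff
        (p.natDegree + q.natDegree - 2)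
      = ((p.natDegree : ℂ) * ((p.natDegree : ℂ) - 1)) * (p.leadingCoeff * q.leadingCoeff) := by
  rcases le_or_gt p.natDegree 1 with h | h
  · have h1 : (Polynomial.derivative p).natDegree = 0 := by
      have := Polynomial.natDegree_derivative_le p; omega
    rw [Polynomial.derivative_of_natDegree_zero h1, zero_mul, Polynomial.coeff_zero]
    obtain h0 | h0 := Nat.le_one_iff_eq_zero_or_eq_one.mp h <;> rw [h0] <;> norm_num
  · have hb : (Polynomial.derivative (Polynomial.derivative p)).natDegree ≤ p.natDegree - 2 := by
      have h1 := Polynomial.natDegree_derivative_le p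
      have h2 := Polynomial.natDegree_derivative_le (Polynomial.derivative p)
      omega
    have e : p.natDegree + q.natDegree - 2 = (p.natDegree - 2) + q.natDegree := by omega
    rw [e, Polynomial.coeff_mul_add_eq_of_natDegree_le hb le_rfl, Polynomial.coeff_derivative,
      Polynomial.coeff_derivative]
    have e2 : p.natDegree - 2 + 1 + 1 = p.natDegree := by omega
    rw [e2]
    have e3 : ((p.natDegree - 2 : ℕ) : ℂ) = (p.natDegree : ℂ) - 2 := by
      rw [Nat.cast_sub (by omega)]; norm_num
    simp only [Polynomial.leadingCoeff]
    push_cast [e3]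
    ring

lemma aux_d_d_mul (p q : Polynomial ℂ) :
    (Polynomial.derivative p * Polynomial.derivative q).coeff
        (p.natDegree + q.natDegree - 2)
      = ((p.natDegree : ℂ) * (q.natDegree : ℂ)) * (p.leadingCoeff * q.leadingCoeff) := by
  rcases Nat.eq_zero_or_pos p.natDegree with h0 | h0
  · rw [Polynomial.derivative_of_natDegree_zero h0, zero_mul, Polynomial.coeff_zero, h0]
    norm_num
  rcases Nat.eq_zero_or_pos q.natDegree with h1 | h1
  · rw [Polynomial.derivative_of_natDegree_zero h1, mul_zero, Polynomial.coeff_zero, h1]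
    norm_num
  have hb1 : (Polynomial.derivative p).natDegree ≤ p.natDegree - 1 :=
    Polynomial.natDegree_derivative_le p
  have hb2 : (Polynomial.derivative q).natDegree ≤ q.natDegree - 1 :=
    Polynomial.natDegree_derivative_le q
  have e : p.natDegree + q.natDegree - 2 = (p.natDegree - 1) + (q.natDegree - 1) := by omega
  rw [e, Polynomial.coeff_mul_add_eq_of_natDegree_le hb1 hb2, Polynomial.coeff_derivative,
    Polynomial.coeff_derivative]
  have e1 : p.natDegree - 1 + 1 = p.natDegree := by omega
  have e2 : q.natDegree - 1 + 1 = q.natDegree := by omega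
  rw [e1, e2]
  have e3 : ((p.natDegree - 1 : ℕ) : ℂ) = (p.natDegree : ℂ) - 1 := by
    rw [Nat.cast_sub (by omega)]; norm_num
  have e4 : ((q.natDegree - 1 : ℕ) : ℂ) = (q.natDegree : ℂ) - 1 := by
    rw [Nat.cast_sub (by omega)]; norm_num
  rw [e3, e4, Polynomial.leadingCoeff, Polynomial.leadingCoeff]
  ring

/-- **Degrees of stationary vortex polynomials are successive triangular numbers.**
If nonzero polynomials `P`, `Q` of degrees `j`, `k` satisfy
`P''Q − 2P'Q' + PQ'' = 0` identically, then `(j − k)² = j + k`; equivalently, with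
`d = j − k`, one has `j = d(d+1)/2` and `k = d(d−1)/2`. -/
theorem bilinear_degrees_triangular (P Q : Polynomial ℂ) (hP : P ≠ 0) (hQ : Q ≠ 0)
    (h : Polynomial.derivative (Polynomial.derivative P) * Q
        - 2 * Polynomial.derivative P * Polynomial.derivative Q
        + P * Polynomial.derivative (Polynomial.derivative Q) = 0) :
    ((P.natDegree : ℤ) - (Q.natDegree : ℤ)) ^ 2 = (P.natDegree : ℤ) + (Q.natDegree : ℤ) ∧
    ∃ d : ℤ, d = (P.natDegree : ℤ) - (Q.natDegree : ℤ) ∧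
      2 * (P.natDegree : ℤ) = d * (d + 1) ∧ 2 * (Q.natDegree : ℤ) = d * (d - 1) := by
  have key : ((P.natDegree : ℤ) - (Q.natDegree : ℤ)) ^ 2
      = (P.natDegree : ℤ) + (Q.natDegree : ℤ) := by
    rcases le_or_gt (P.natDegree + Q.natDegree) 1 with hsmall | hbig
    · have hj : P.natDegree ≤ 1 := by omega
      have hk : Q.natDegree ≤ 1 := by omega
      interval_cases hP' : P.natDegree <;> interval_cases hQ' : Q.natDegree <;>
        simp_all
    · have hc := congrArg (fun p => Polynomial.coeff p (P.natDegree + Q.natDegree - 2)) h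
      simp only [Polynomial.coeff_add, Polynomial.coeff_sub, Polynomial.coeff_zero] at hc
      have h2 : (2 : Polynomial ℂ) * Polynomial.derivative P * Polynomial.derivative Q
          = Polynomial.derivative P * Polynomial.derivative Q
            + Polynomial.derivative P * Polynomial.derivative Q := by ring
      rw [h2, Polynomial.coeff_add] at hc
      have hPQ : P * Polynomial.derivative (Polynomial.derivative Q)
          = Polynomial.derivative (Polynomial.derivative Q) * P := mul_comm _ _
      have e : P.natDegree + Q.natDegree - 2 = Q.natDegree + P.natDegree - 2 := by omega
      rw [aux_dd_mul P Q, aux_d_d_mul P Q, hPQ, e, aux_dd_mul Q P] at hc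
      have ha : P.leadingCoeff ≠ 0 := Polynomial.leadingCoeff_ne_zero.mpr hP
      have hb : Q.leadingCoeff ≠ 0 := Polynomial.leadingCoeff_ne_zero.mpr hQ
      set j : ℂ := (P.natDegree : ℂ)
      set k : ℂ := (Q.natDegree : ℂ)
      have hE : (j * (j - 1) - 2 * (j * k) + k * (k - 1))
          * (P.leadingCoeff * Q.leadingCoeff) = 0 := by
        linear_combination hc
      have hE' : j * (j - 1) - 2 * (j * k) + k * (k - 1) = 0 :=
        (mul_eq_zero.mp hE).resolve_right (mul_ne_zero ha hb)
      have hZ : (((( (P.natDegree : ℤ) - (Q.natDegree : ℤ)) ^ 2 : ℤ)) : ℂ)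
          = ((((P.natDegree : ℤ) + (Q.natDegree : ℤ)) : ℤ) : ℂ) := by
        push_cast
        linear_combination hE'
      exact_mod_cast hZ
  refine ⟨key, (P.natDegree : ℤ) - (Q.natDegree : ℤ), rfl, ?_, ?_⟩ <;> linear_combination -key
end

section
/- Let z_1, …, z_m, ζ_1, …, ζ_n be m + n pairwise distinct complex numbers such that ∑_{k ≠ j} 1/(z_j − z_k) = ∑_{ℓ=1}^{n} 1/(z_j − ζ_ℓ) for every j = 1, …, m, and ∑_{ℓ ≠ j} 1/(ζ_j − ζ_ℓ) = ∑_{k=1}^{m} 1/(ζ_j − z_k) for every j = 1, …, n (the stationarity equations for m positive and n negative unit vortices). Then the polynomials P(z) = ∏_{j=1}^{m}(z − z_j) and Q(z) = ∏_{ℓ=1}^{n}(z − ζ_ℓ) satisfy P''Q − 2P'Q' + PQ'' = 0 identically. -/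
open Polynomial

lemma eval_derivative_prod_aux {ι : Type*} [DecidableEq ι] (s : Finset ι) (f : ι → ℂ) (a : ℂ) :
    Polynomial.eval a (Polynomial.derivative (∏ i ∈ s, (Polynomial.X - Polynomial.C (f i))))
      = ∑ i ∈ s, ∏ k ∈ s.erase i, (a - f k) := by
  classical
  induction s using Finset.induction_on with
  | empty => simp
  | @insert a s ha ih =>
    rw [Finset.prod_insert ha, Polynomial.derivative_mul, Polynomial.eval_add,
      Polynomial.eval_mul, Polynomial.eval_mul, ih, Finset.sum_insert ha,
      Finset.erase_insert ha, Finset.mul_sum]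
    simp only [Polynomial.derivative_sub, Polynomial.derivative_X, Polynomial.derivative_C,
      sub_zero, Polynomial.eval_one, one_mul, Polynomial.eval_sub, Polynomial.eval_X,
      Polynomial.eval_C, Polynomial.eval_prod]
    congr 1
    refine Finset.sum_congr rfl fun i hi => ?_
    rw [Finset.erase_insert_of_ne (ne_of_mem_of_not_mem hi ha).symm,
      Finset.prod_insert (fun h => ha (Finset.mem_of_mem_erase h))]

lemma sum_prod_erase_aux {ι : Type*} [DecidableEq ι] (s : Finset ι) (f : ι → ℂ) (a : ℂ)
    (hne : ∀ i ∈ s, a - f i ≠ 0) :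
    ∑ i ∈ s, ∏ k ∈ s.erase i, (a - f k)
      = (∑ i ∈ s, 1 / (a - f i)) * ∏ k ∈ s, (a - f k) := by
  rw [Finset.sum_mul]
  refine Finset.sum_congr rfl fun i hi => ?_
  rw [← Finset.prod_erase_mul s _ hi, one_div, mul_comm ((a - f i)⁻¹), mul_assoc,
    mul_inv_cancel₀ (hne i hi), mul_one]

lemma key_eval_aux {m n : ℕ} (z : Fin m → ℂ) (ζ : Fin n → ℂ)
    (hz : Function.Injective z)
    (hzζ : ∀ (j : Fin m) (k : Fin n), z j ≠ ζ k)
    (h1 : ∀ j : Fin m,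
      ∑ k ∈ Finset.univ.erase j, 1 / (z j - z k) = ∑ l : Fin n, 1 / (z j - ζ l))
    (j : Fin m) :
    Polynomial.eval (z j)
      (Polynomial.derivative (Polynomial.derivative
          (∏ j : Fin m, (Polynomial.X - Polynomial.C (z j))))
        * (∏ l : Fin n, (Polynomial.X - Polynomial.C (ζ l)))
      - 2 * Polynomial.derivative (∏ j : Fin m, (Polynomial.X - Polynomial.C (z j)))
        * Polynomial.derivative (∏ l : Fin n, (Polynomial.X - Polynomial.C (ζ l)))
      + (∏ j : Fin m, (Polynomial.X - Polynomial.C (z j)))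
        * Polynomial.derivative (Polynomial.derivative
          (∏ l : Fin n, (Polynomial.X - Polynomial.C (ζ l))))) = 0 := by
  set P : Polynomial ℂ := ∏ j : Fin m, (Polynomial.X - Polynomial.C (z j)) with hPdef
  set Q : Polynomial ℂ := ∏ l : Fin n, (Polynomial.X - Polynomial.C (ζ l)) with hQdef
  set R : Polynomial ℂ := ∏ k ∈ Finset.univ.erase j, (Polynomial.X - Polynomial.C (z k))
    with hRdef
  have hPR : P = (Polynomial.X - Polynomial.C (z j)) * R := by
    rw [hPdef, hRdef]
    exact (Finset.mul_prod_erase Finset.univ (fun k => Polynomial.X - Polynomial.C (z k))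
      (Finset.mem_univ j)).symm
  have hP' : Polynomial.derivative P
      = R + (Polynomial.X - Polynomial.C (z j)) * Polynomial.derivative R := by
    rw [hPR]; simp [Polynomial.derivative_mul]
  have hP'' : Polynomial.derivative (Polynomial.derivative P)
      = 2 * Polynomial.derivative R
        + (Polynomial.X - Polynomial.C (z j))
          * Polynomial.derivative (Polynomial.derivative R) := by
    rw [hP']
    simp [Polynomial.derivative_mul]
    ring
  have hnez : ∀ k ∈ Finset.univ.erase j, z j - z k ≠ 0 := by
    intro k hk
    have : k ≠ j := (Finset.mem_erase.mp hk).1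
    exact sub_ne_zero.mpr fun h => this (hz h.symm)
  have hneζ : ∀ l ∈ (Finset.univ : Finset (Fin n)), z j - ζ l ≠ 0 := fun l _ =>
    sub_ne_zero.mpr (hzζ j l)
  have hevR : Polynomial.eval (z j) (Polynomial.derivative R)
      = (∑ k ∈ Finset.univ.erase j, 1 / (z j - z k)) * Polynomial.eval (z j) R := by
    rw [hRdef, eval_derivative_prod_aux, sum_prod_erase_aux _ _ _ hnez]
    simp [Polynomial.eval_prod]
  have hevQ : Polynomial.eval (z j) (Polynomial.derivative Q)
      = (∑ l : Fin n, 1 / (z j - ζ l)) * Polynomial.eval (z j) Q := by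
    rw [hQdef, eval_derivative_prod_aux, sum_prod_erase_aux _ _ _ hneζ]
    simp [Polynomial.eval_prod]
  rw [Polynomial.eval_add, Polynomial.eval_sub, Polynomial.eval_mul, Polynomial.eval_mul,
    Polynomial.eval_mul, hP'', hP', hPR]
  simp only [Polynomial.eval_add, Polynomial.eval_mul, Polynomial.eval_sub, Polynomial.eval_X,
    Polynomial.eval_C, Polynomial.eval_ofNat, sub_self, zero_mul, mul_zero, add_zero, zero_add]
  rw [hevR, hevQ, h1 j]
  ring

/-- **Stationary vortex configurations satisfy the bilinear equation.**
If `z_1, …, z_m, ζ_1, …, ζ_n` are pairwise distinct and satisfy the stationarity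
equations for `m` positive and `n` negative unit vortices, then
`P = ∏ (z − z_j)`, `Q = ∏ (z − ζ_ℓ)` satisfy `P''Q − 2P'Q' + PQ'' = 0`. -/
theorem stationary_vortices_bilinear (m n : ℕ) (z : Fin m → ℂ) (ζ : Fin n → ℂ)
    (hz : Function.Injective z) (hζ : Function.Injective ζ)
    (hzζ : ∀ (j : Fin m) (k : Fin n), z j ≠ ζ k)
    (h1 : ∀ j : Fin m,
      ∑ k ∈ Finset.univ.erase j, 1 / (z j - z k) = ∑ l : Fin n, 1 / (z j - ζ l))
    (h2 : ∀ j : Fin n,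
      ∑ l ∈ Finset.univ.erase j, 1 / (ζ j - ζ l) = ∑ k : Fin m, 1 / (ζ j - z k))
    (P Q : Polynomial ℂ)
    (hP : P = ∏ j : Fin m, (Polynomial.X - Polynomial.C (z j)))
    (hQ : Q = ∏ l : Fin n, (Polynomial.X - Polynomial.C (ζ l))) :
    Polynomial.derivative (Polynomial.derivative P) * Q
      - 2 * Polynomial.derivative P * Polynomial.derivative Q
      + P * Polynomial.derivative (Polynomial.derivative Q) = 0 := by
  set F : Polynomial ℂ :=
    Polynomial.derivative (Polynomial.derivative P) * Q
      - 2 * Polynomial.derivative P * Polynomial.derivative Q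
      + P * Polynomial.derivative (Polynomial.derivative Q) with hF
  by_cases hF0 : F = 0
  · exact hF0
  -- degree facts
  have hdP : P.degree = (m : WithBot ℕ) := by
    rw [hP, Polynomial.degree_prod]
    simp [Polynomial.degree_X_sub_C]
  have hdQ : Q.degree = (n : WithBot ℕ) := by
    rw [hQ, Polynomial.degree_prod]
    simp [Polynomial.degree_X_sub_C]
  have hP0 : P ≠ 0 := hP ▸
    (Polynomial.monic_prod_of_monic _ _ fun _ _ => Polynomial.monic_X_sub_C _).ne_zero
  have hQ0 : Q ≠ 0 := hQ ▸
    (Polynomial.monic_prod_of_monic _ _ fun _ _ => Polynomial.monic_X_sub_C _).ne_zero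
  have hdP' : (Polynomial.derivative P).degree < (m : WithBot ℕ) :=
    hdP ▸ Polynomial.degree_derivative_lt hP0
  have hdP'' : (Polynomial.derivative (Polynomial.derivative P)).degree < (m : WithBot ℕ) :=
    lt_of_le_of_lt Polynomial.degree_derivative_le hdP'
  have hdQ' : (Polynomial.derivative Q).degree < (n : WithBot ℕ) :=
    hdQ ▸ Polynomial.degree_derivative_lt hQ0
  have hdQ'' : (Polynomial.derivative (Polynomial.derivative Q)).degree < (n : WithBot ℕ) :=
    lt_of_le_of_lt Polynomial.degree_derivative_le hdQ'
  have hnb : ((n : ℕ) : WithBot ℕ) ≠ ⊥ := by exact_mod_cast WithBot.natCast_ne_bot n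
  have hdeg : F.degree < ((m + n : ℕ) : WithBot ℕ) := by
    have h1d : (Polynomial.derivative (Polynomial.derivative P) * Q).degree
        < ((m + n : ℕ) : WithBot ℕ) := by
      rw [Polynomial.degree_mul, hdQ, Nat.cast_add]
      exact WithBot.add_lt_add_of_lt_of_le hnb hdP'' le_rfl
    have h2d : (2 * Polynomial.derivative P * Polynomial.derivative Q).degree
        < ((m + n : ℕ) : WithBot ℕ) := by
      rw [Polynomial.degree_mul, Polynomial.degree_mul, Nat.cast_add]
      have : ((2 : Polynomial ℂ)).degree = 0 := by
        have h2C : (2 : Polynomial ℂ) = Polynomial.C 2 := (map_ofNat Polynomial.C 2).symm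
        rw [h2C, Polynomial.degree_C (by norm_num : (2:ℂ) ≠ 0)]
      rw [this, zero_add]
      exact (show (Polynomial.derivative P).degree + (Polynomial.derivative Q).degree
          ≤ (Polynomial.derivative P).degree + (n : WithBot ℕ) by gcongr).trans_lt
        (WithBot.add_lt_add_right hnb hdP')
    have h3d : (P * Polynomial.derivative (Polynomial.derivative Q)).degree
        < ((m + n : ℕ) : WithBot ℕ) := by
      rw [Polynomial.degree_mul, hdP, Nat.cast_add]
      exact WithBot.add_lt_add_of_le_of_lt (by exact_mod_cast WithBot.natCast_ne_bot m)
        le_rfl hdQ''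
    calc F.degree ≤ max (Polynomial.derivative (Polynomial.derivative P) * Q
          - 2 * Polynomial.derivative P * Polynomial.derivative Q).degree
          (P * Polynomial.derivative (Polynomial.derivative Q)).degree :=
        Polynomial.degree_add_le _ _
      _ < ((m + n : ℕ) : WithBot ℕ) := by
        apply max_lt _ h3d
        exact lt_of_le_of_lt (Polynomial.degree_sub_le _ _) (max_lt h1d h2d)
  have hnat : F.natDegree < m + n := (Polynomial.natDegree_lt_iff_degree_lt hF0).mpr hdeg
  -- evaluation facts
  have hinj : Function.Injective (Sum.elim z ζ : Fin m ⊕ Fin n → ℂ) := by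
    rintro (a | a) (b | b) h <;> simp only [Sum.elim_inl, Sum.elim_inr] at h
    · exact congrArg Sum.inl (hz h)
    · exact absurd h (hzζ a b)
    · exact absurd h.symm (hzζ b a)
    · exact congrArg Sum.inr (hζ h)
  have heval : ∀ i : Fin m ⊕ Fin n, F.eval (Sum.elim z ζ i) = 0 := by
    rintro (j | j)
    · rw [hF, hP, hQ]
      exact key_eval_aux z ζ hz hzζ h1 j
    · rw [hF, hP, hQ]
      have hswap : ∀ (A B : Polynomial ℂ),
          Polynomial.derivative (Polynomial.derivative A) * B
            - 2 * Polynomial.derivative A * Polynomial.derivative B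
            + A * Polynomial.derivative (Polynomial.derivative B)
          = Polynomial.derivative (Polynomial.derivative B) * A
            - 2 * Polynomial.derivative B * Polynomial.derivative A
            + B * Polynomial.derivative (Polynomial.derivative A) := fun A B => by ring
      rw [hswap]
      exact key_eval_aux ζ z hζ (fun a b => (hzζ b a).symm)
        h2 j
  have := Polynomial.eq_zero_of_natDegree_lt_card_of_eval_eq_zero F hinj heval
    (by simpa using hnat)
  exact this
end

section
/- Let μ ∈ ℂ and let z_1, …, z_m, ζ_1, …, ζ_n be m + n pairwise distinct complex numbers such that ∑_{k ≠ j} 1/(z_j − z_k) = −μ + ∑_{ℓ=1}^{n} 1/(z_j − ζ_ℓ) for every j = 1, …, m, and ∑_{ℓ ≠ j} 1/(ζ_j − ζ_ℓ) = μ + ∑_{k=1}^{m} 1/(ζ_j − z_k) for every j = 1, …, n (the equations for a uniformly translating configuration of m positive and n negative unit vortices). Then the polynomials P(z) = ∏_{j=1}^{m}(z − z_j) and Q(z) = ∏_{ℓ=1}^{n}(z − ζ_ℓ) satisfy P''Q − 2P'Q' + PQ'' + 2μ(P'Q − PQ') = 0 identically. -/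
open Polynomial Finset

private lemma deriv_prod_lin {ι : Type*} [DecidableEq ι] (s : Finset ι) (a : ι → ℂ) :
    derivative (∏ i ∈ s, (X - C (a i))) =
      ∑ i ∈ s, ∏ k ∈ s.erase i, (X - C (a k)) := by
  induction s using Finset.induction_on with
  | empty => simp
  | @insert b s hb ih =>
      rw [Finset.prod_insert hb, derivative_mul, derivative_X_sub_C, ih, one_mul,
        Finset.sum_insert hb, Finset.erase_insert hb, Finset.mul_sum]
      congr 1
      refine Finset.sum_congr rfl fun i hi => ?_
      rw [Finset.erase_insert_of_ne (by rintro rfl; exact hb hi),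
        Finset.prod_insert (fun h => hb (Finset.mem_of_mem_erase h))]

private lemma eval_deriv_prod_lin {ι : Type*} [DecidableEq ι] (s : Finset ι) (a : ι → ℂ)
    (w : ℂ) :
    eval w (derivative (∏ i ∈ s, (X - C (a i)))) =
      ∑ i ∈ s, ∏ k ∈ s.erase i, (w - a k) := by
  rw [deriv_prod_lin]
  simp [eval_finset_sum, eval_prod]

private lemma eval_deriv_at_root {ι : Type*} [DecidableEq ι] [Fintype ι] (a : ι → ℂ) (j : ι) :
    eval (a j) (derivative (∏ i : ι, (X - C (a i)))) =
      ∏ k ∈ Finset.univ.erase j, (a j - a k) := by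
  rw [eval_deriv_prod_lin]
  refine Finset.sum_eq_single j (fun i _ hij => ?_) (fun h => absurd (Finset.mem_univ j) h)
  exact Finset.prod_eq_zero (Finset.mem_erase.mpr ⟨(Ne.symm hij), Finset.mem_univ j⟩)
    (sub_self _)

private lemma eval_deriv2_at_root {ι : Type*} [DecidableEq ι] [Fintype ι] (a : ι → ℂ) (j : ι) :
    eval (a j) (derivative (derivative (∏ i : ι, (X - C (a i))))) =
      2 * ∑ i ∈ Finset.univ.erase j,
            ∏ k ∈ (Finset.univ.erase j).erase i, (a j - a k) := by
  have hd2 : derivative (derivative (∏ i : ι, (X - C (a i)))) =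
      ∑ b : ι, ∑ i ∈ Finset.univ.erase b,
        ∏ k ∈ (Finset.univ.erase b).erase i, (X - C (a k)) := by
    rw [deriv_prod_lin, derivative_sum]
    exact Finset.sum_congr rfl fun b _ => deriv_prod_lin _ a
  rw [hd2, eval_finset_sum, ← Finset.add_sum_erase _ _ (Finset.mem_univ j)]
  have hjterm : eval (a j) (∑ i ∈ Finset.univ.erase j,
      ∏ k ∈ (Finset.univ.erase j).erase i, (X - C (a k))) =
      ∑ i ∈ Finset.univ.erase j, ∏ k ∈ (Finset.univ.erase j).erase i, (a j - a k) := by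
    simp [eval_finset_sum, eval_prod]
  have hother : ∀ b ∈ Finset.univ.erase j,
      eval (a j) (∑ i ∈ Finset.univ.erase b,
        ∏ k ∈ (Finset.univ.erase b).erase i, (X - C (a k))) =
      ∏ k ∈ (Finset.univ.erase j).erase b, (a j - a k) := by
    intro b hb
    have hbj : b ≠ j := (Finset.mem_erase.mp hb).1
    have key : ∑ i ∈ Finset.univ.erase b,
        eval (a j) (∏ k ∈ (Finset.univ.erase b).erase i, (X - C (a k)))
        = eval (a j) (∏ k ∈ (Finset.univ.erase b).erase j, (X - C (a k))) := by
      refine Finset.sum_eq_single j (fun i _ hij => ?_) (fun h => ?_)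
      · rw [eval_prod]
        refine Finset.prod_eq_zero (i := j) ?_ (by simp)
        exact Finset.mem_erase.mpr ⟨Ne.symm hij,
          Finset.mem_erase.mpr ⟨Ne.symm hbj, Finset.mem_univ j⟩⟩
      · exact absurd (Finset.mem_erase.mpr ⟨Ne.symm hbj, Finset.mem_univ j⟩) h
    rw [eval_finset_sum, key, Finset.erase_right_comm]
    simp [eval_prod]
  rw [hjterm, Finset.sum_congr rfl hother, two_mul]

private lemma sum_prod_erase_eq {ι : Type*} [DecidableEq ι] (t : Finset ι) (c : ι → ℂ)
    (hc : ∀ k ∈ t, c k ≠ 0) :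
    ∑ i ∈ t, ∏ k ∈ t.erase i, c k = (∏ k ∈ t, c k) * ∑ i ∈ t, 1 / c i := by
  rw [Finset.mul_sum]
  refine Finset.sum_congr rfl fun i hi => ?_
  rw [← Finset.mul_prod_erase t c hi]
  field_simp [hc i hi]

/-- **Uniformly translating vortex configurations satisfy the bilinear equation.**
If `z_1, …, z_m, ζ_1, …, ζ_n` are pairwise distinct and satisfy the translating
equilibrium equations with velocity parameter `μ`, then `P = ∏ (z − z_j)`,
`Q = ∏ (z − ζ_ℓ)` satisfy `P''Q − 2P'Q' + PQ'' + 2μ(P'Q − PQ') = 0`. -/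
theorem translating_vortices_bilinear (μ : ℂ) (m n : ℕ) (z : Fin m → ℂ) (ζ : Fin n → ℂ)
    (hz : Function.Injective z) (hζ : Function.Injective ζ)
    (hzζ : ∀ (j : Fin m) (k : Fin n), z j ≠ ζ k)
    (h1 : ∀ j : Fin m,
      ∑ k ∈ Finset.univ.erase j, 1 / (z j - z k) = -μ + ∑ l : Fin n, 1 / (z j - ζ l))
    (h2 : ∀ j : Fin n,
      ∑ l ∈ Finset.univ.erase j, 1 / (ζ j - ζ l) = μ + ∑ k : Fin m, 1 / (ζ j - z k))
    (P Q : Polynomial ℂ)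
    (hP : P = ∏ j : Fin m, (Polynomial.X - Polynomial.C (z j)))
    (hQ : Q = ∏ l : Fin n, (Polynomial.X - Polynomial.C (ζ l))) :
    Polynomial.derivative (Polynomial.derivative P) * Q
      - 2 * Polynomial.derivative P * Polynomial.derivative Q
      + P * Polynomial.derivative (Polynomial.derivative Q)
      + Polynomial.C (2 * μ) * (Polynomial.derivative P * Q - P * Polynomial.derivative Q)
      = 0 := by
  set F : Polynomial ℂ :=
    Polynomial.derivative (Polynomial.derivative P) * Q
      - 2 * Polynomial.derivative P * Polynomial.derivative Q
      + P * Polynomial.derivative (Polynomial.derivative Q)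
      + Polynomial.C (2 * μ) * (Polynomial.derivative P * Q - P * Polynomial.derivative Q)
    with hF
  -- evaluation at the z-roots
  have hevalz : ∀ j : Fin m, F.eval (z j) = 0 := by
    intro j
    have hPz : P.eval (z j) = 0 := by
      rw [hP, eval_prod]
      exact Finset.prod_eq_zero (Finset.mem_univ j) (by simp)
    have hP'z : (derivative P).eval (z j) = ∏ k ∈ Finset.univ.erase j, (z j - z k) := by
      rw [hP, eval_deriv_at_root]
    have hP''z : (derivative (derivative P)).eval (z j) =
        2 * ((∏ k ∈ Finset.univ.erase j, (z j - z k)) *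
          ∑ k ∈ Finset.univ.erase j, 1 / (z j - z k)) := by
      rw [hP, eval_deriv2_at_root, sum_prod_erase_eq]
      intro k hk
      exact sub_ne_zero.mpr fun h => (Finset.mem_erase.mp hk).1 (hz h.symm)
    have hQz : Q.eval (z j) = ∏ l : Fin n, (z j - ζ l) := by
      rw [hQ, eval_prod]; simp
    have hQ'z : (derivative Q).eval (z j) =
        (∏ l : Fin n, (z j - ζ l)) * ∑ l : Fin n, 1 / (z j - ζ l) := by
      rw [hQ, eval_deriv_prod_lin, sum_prod_erase_eq]
      intro k _
      exact sub_ne_zero.mpr (hzζ j k)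
    rw [hF]
    simp only [eval_add, eval_sub, eval_mul, eval_C, eval_ofNat]
    rw [hPz, hP'z, hP''z, hQz, hQ'z]
    linear_combination (2 * (∏ k ∈ Finset.univ.erase j, (z j - z k)) *
      (∏ l : Fin n, (z j - ζ l))) * h1 j
  -- evaluation at the ζ-roots
  have hevalζ : ∀ j : Fin n, F.eval (ζ j) = 0 := by
    intro j
    have hQz : Q.eval (ζ j) = 0 := by
      rw [hQ, eval_prod]
      exact Finset.prod_eq_zero (Finset.mem_univ j) (by simp)
    have hQ'z : (derivative Q).eval (ζ j) = ∏ k ∈ Finset.univ.erase j, (ζ j - ζ k) := by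
      rw [hQ, eval_deriv_at_root]
    have hQ''z : (derivative (derivative Q)).eval (ζ j) =
        2 * ((∏ k ∈ Finset.univ.erase j, (ζ j - ζ k)) *
          ∑ k ∈ Finset.univ.erase j, 1 / (ζ j - ζ k)) := by
      rw [hQ, eval_deriv2_at_root, sum_prod_erase_eq]
      intro k hk
      exact sub_ne_zero.mpr fun h => (Finset.mem_erase.mp hk).1 (hζ h.symm)
    have hPz : P.eval (ζ j) = ∏ k : Fin m, (ζ j - z k) := by
      rw [hP, eval_prod]; simp
    have hP'z : (derivative P).eval (ζ j) =
        (∏ k : Fin m, (ζ j - z k)) * ∑ k : Fin m, 1 / (ζ j - z k) := by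
      rw [hP, eval_deriv_prod_lin, sum_prod_erase_eq]
      intro k _
      exact sub_ne_zero.mpr (hzζ k j).symm
    rw [hF]
    simp only [eval_add, eval_sub, eval_mul, eval_C, eval_ofNat]
    rw [hQz, hQ'z, hQ''z, hPz, hP'z]
    linear_combination (2 * (∏ k ∈ Finset.univ.erase j, (ζ j - ζ k)) *
      (∏ k : Fin m, (ζ j - z k))) * h2 j
  -- degree bound
  have hPd : P.degree = (m : WithBot ℕ) := by
    rw [hP, degree_prod]
    simp [degree_X_sub_C]
  have hQd : Q.degree = (n : WithBot ℕ) := by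
    rw [hQ, degree_prod]
    simp [degree_X_sub_C]
  have hPne : P ≠ 0 := fun h => by simp [h] at hPd
  have hQne : Q ≠ 0 := fun h => by simp [h] at hQd
  have hP' : (derivative P).degree < (m : WithBot ℕ) := hPd ▸ degree_derivative_lt hPne
  have hQ' : (derivative Q).degree < (n : WithBot ℕ) := hQd ▸ degree_derivative_lt hQne
  have hP'' : (derivative (derivative P)).degree < (m : WithBot ℕ) :=
    lt_of_le_of_lt degree_derivative_le hP'
  have hQ'' : (derivative (derivative Q)).degree < (n : WithBot ℕ) :=
    lt_of_le_of_lt degree_derivative_le hQ'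
  have hnb : ((n : ℕ) : WithBot ℕ) ≠ ⊥ := by exact_mod_cast WithBot.natCast_ne_bot n
  have hmn : ((m + n : ℕ) : WithBot ℕ) = (m : WithBot ℕ) + (n : WithBot ℕ) := by
    push_cast; ring
  have ht1 : (derivative (derivative P) * Q).degree < ((m + n : ℕ) : WithBot ℕ) := by
    refine lt_of_le_of_lt (degree_mul_le _ _) ?_
    rw [hmn, hQd]
    exact WithBot.add_lt_add_of_lt_of_le hnb hP'' le_rfl
  have ht2 : (2 * derivative P * derivative Q).degree < ((m + n : ℕ) : WithBot ℕ) := by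
    refine lt_of_le_of_lt (degree_mul_le _ _) ?_
    rw [hmn]
    refine lt_of_le_of_lt (add_le_add_left ?_ _) (WithBot.add_lt_add_left (WithBot.natCast_ne_bot m) hQ')
    refine le_trans (degree_mul_le _ _) ?_
    have h2d : (2 : Polynomial ℂ).degree ≤ 0 := by
      rw [← map_ofNat (C : ℂ →+* Polynomial ℂ) 2]; exact degree_C_le
    calc (2 : Polynomial ℂ).degree + (derivative P).degree
        ≤ 0 + (derivative P).degree := add_le_add_left h2d _
      _ = (derivative P).degree := zero_add _
      _ ≤ (m : WithBot ℕ) := le_of_lt hP'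
  have ht3 : (P * derivative (derivative Q)).degree < ((m + n : ℕ) : WithBot ℕ) := by
    refine lt_of_le_of_lt (degree_mul_le _ _) ?_
    rw [hmn, hPd]
    exact WithBot.add_lt_add_of_le_of_lt (WithBot.natCast_ne_bot m) le_rfl hQ''
  have ht4 : (C (2 * μ) * (derivative P * Q - P * derivative Q)).degree
      < ((m + n : ℕ) : WithBot ℕ) := by
    refine lt_of_le_of_lt (degree_mul_le _ _) ?_
    have hCle : (C (2 * μ)).degree ≤ 0 := degree_C_le
    have hsub : (derivative P * Q - P * derivative Q).degree < ((m + n : ℕ) : WithBot ℕ) := by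
      refine lt_of_le_of_lt (degree_sub_le _ _) (max_lt ?_ ?_)
      · refine lt_of_le_of_lt (degree_mul_le _ _) ?_
        rw [hmn, hQd]
        exact WithBot.add_lt_add_of_lt_of_le hnb hP' le_rfl
      · refine lt_of_le_of_lt (degree_mul_le _ _) ?_
        rw [hmn, hPd]
        exact WithBot.add_lt_add_of_le_of_lt (WithBot.natCast_ne_bot m) le_rfl hQ'
    calc (C (2 * μ)).degree + (derivative P * Q - P * derivative Q).degree
        ≤ 0 + (derivative P * Q - P * derivative Q).degree := add_le_add_left hCle _
      _ = (derivative P * Q - P * derivative Q).degree := zero_add _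
      _ < ((m + n : ℕ) : WithBot ℕ) := hsub
  have hFdeg : F.degree < ((m + n : ℕ) : WithBot ℕ) := by
    rw [hF]
    refine lt_of_le_of_lt (degree_add_le _ _) (max_lt ?_ ht4)
    refine lt_of_le_of_lt (degree_add_le _ _) (max_lt ?_ ht3)
    exact lt_of_le_of_lt (degree_sub_le _ _) (max_lt ht1 ht2)
  -- conclude
  by_cases hF0 : F = 0
  · exact hF0
  · exfalso
    apply hF0
    have hinj : Function.Injective (Sum.elim z ζ : Fin m ⊕ Fin n → ℂ) := by
      rintro (a | a) (b | b) h
      · exact congrArg Sum.inl (hz h)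
      · exact absurd h (hzζ a b)
      · exact absurd h.symm (hzζ b a)
      · exact congrArg Sum.inr (hζ h)
    refine Polynomial.eq_zero_of_natDegree_lt_card_of_eval_eq_zero F hinj ?_ ?_
    · rintro (a | a)
      · exact hevalz a
      · exact hevalζ a
    · rw [Fintype.card_sum, Fintype.card_fin, Fintype.card_fin]
      exact (natDegree_lt_iff_degree_lt hF0).mpr hFdeg
end

section
/- Let P and Q be complex polynomials and μ ∈ ℂ. Then for every z ∈ ℂ with Q(z) ≠ 0, the function ψ(z) = (P(z)/Q(z)) e^{μz} and the potential u = −2 (Q''Q − (Q')²)/Q² satisfy −ψ''(z) + u(z) ψ(z) + μ² ψ(z) = −(e^{μz}/Q(z)²) · (P''Q − 2P'Q' + PQ'' + 2μ(P'Q − PQ'))(z). In particular, if P''Q − 2P'Q' + PQ'' + 2μ(P'Q − PQ') = 0 identically, then ψ is an eigenstate of the Schrödinger operator −d²/dz² + u with eigenvalue −μ² on the set where Q ≠ 0. -/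
open Polynomial

private lemma tsch_alg (p q p1 q1 p2 q2 μ e : ℂ) (hq : q ≠ 0) :
    -((((p2*q - p*q2) * q^2 - (p1*q - p*q1)*(2*q*q1))/(q^2)^2
        + μ*((p1*q - p*q1)/q^2)) * e
      + ((p1*q - p*q1)/q^2 + μ*(p/q))*(μ*e))
    + (-2*(q2*q - q1^2)/q^2)*(p/q*e) + μ^2*(p/q*e)
    = -(e/q^2)*(p2*q - 2*p1*q1 + p*q2 + 2*μ*(p1*q - p*q1)) := by
  field_simp
  ring

private lemma tsch_deriv1 (P Q : Polynomial ℂ) (μ z : ℂ) (hz : Q.eval z ≠ 0) :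
    HasDerivAt (fun w : ℂ => P.eval w / Q.eval w * Complex.exp (μ * w))
      ((((derivative P * Q - P * derivative Q).eval z) / (Q.eval z) ^ 2
        + μ * (P.eval z / Q.eval z)) * Complex.exp (μ * z)) z := by
  have hE : HasDerivAt (fun w : ℂ => Complex.exp (μ * w)) (μ * Complex.exp (μ * z)) z := by
    simpa [mul_comm] using ((hasDerivAt_id z).const_mul μ).cexp
  have h1 := ((P.hasDerivAt z).fun_div (Q.hasDerivAt z) hz).fun_mul hE
  refine h1.congr_deriv ?_
  simp
  ring

private lemma tsch_main (P Q : Polynomial ℂ) (μ : ℂ) (z : ℂ) (hz : Q.eval z ≠ 0) :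
      - deriv (deriv (fun w : ℂ => P.eval w / Q.eval w * Complex.exp (μ * w))) z
        + (-2 * ((Polynomial.derivative (Polynomial.derivative Q) * Q
              - (Polynomial.derivative Q) ^ 2).eval z) / (Q.eval z) ^ 2)
          * (P.eval z / Q.eval z * Complex.exp (μ * z))
        + μ ^ 2 * (P.eval z / Q.eval z * Complex.exp (μ * z))
      = -(Complex.exp (μ * z) / (Q.eval z) ^ 2)
          * ((Polynomial.derivative (Polynomial.derivative P) * Q
              - 2 * Polynomial.derivative P * Polynomial.derivative Q
              + P * Polynomial.derivative (Polynomial.derivative Q)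
              + Polynomial.C (2 * μ)
                * (Polynomial.derivative P * Q - P * Polynomial.derivative Q)).eval z) := by
  set N : Polynomial ℂ := derivative P * Q - P * derivative Q with hN
  set g : ℂ → ℂ := fun w =>
    ((N.eval w) / (Q.eval w) ^ 2 + μ * (P.eval w / Q.eval w)) * Complex.exp (μ * w) with hg
  -- eventually Q ≠ 0
  have hopen : IsOpen {w : ℂ | Q.eval w ≠ 0} :=
    isOpen_ne.preimage (Q.continuous_aeval)
  have hev : ∀ᶠ w in nhds z, Q.eval w ≠ 0 := hopen.mem_nhds hz
  have hev2 : deriv (fun w : ℂ => P.eval w / Q.eval w * Complex.exp (μ * w)) =ᶠ[nhds z] g :=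
    hev.mono fun w hw => (tsch_deriv1 P Q μ w hw).deriv
  -- derivative of g at z
  have hE : HasDerivAt (fun w : ℂ => Complex.exp (μ * w)) (μ * Complex.exp (μ * z)) z := by
    simpa [mul_comm] using ((hasDerivAt_id z).const_mul μ).cexp
  have hQ2 : HasDerivAt (fun w : ℂ => (Q.eval w) ^ 2)
      (2 * Q.eval z * (derivative Q).eval z) z := by
    simpa [mul_comm, mul_assoc] using (Q.hasDerivAt z).fun_pow 2
  have hfrac : HasDerivAt (fun w : ℂ => (N.eval w) / (Q.eval w) ^ 2)
      (((derivative N).eval z * (Q.eval z) ^ 2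
        - N.eval z * (2 * Q.eval z * (derivative Q).eval z)) / ((Q.eval z) ^ 2) ^ 2) z :=
    (N.hasDerivAt z).div hQ2 (pow_ne_zero 2 hz)
  have hrat : HasDerivAt (fun w : ℂ => μ * (P.eval w / Q.eval w))
      (μ * (((derivative P).eval z * Q.eval z - P.eval z * (derivative Q).eval z)
        / (Q.eval z) ^ 2)) z :=
    ((P.hasDerivAt z).div (Q.hasDerivAt z) hz).const_mul μ
  have hgd : HasDerivAt g
      ((((derivative N).eval z * (Q.eval z) ^ 2
          - N.eval z * (2 * Q.eval z * (derivative Q).eval z)) / ((Q.eval z) ^ 2) ^ 2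
        + μ * (((derivative P).eval z * Q.eval z - P.eval z * (derivative Q).eval z)
          / (Q.eval z) ^ 2)) * Complex.exp (μ * z)
       + ((N.eval z) / (Q.eval z) ^ 2 + μ * (P.eval z / Q.eval z))
          * (μ * Complex.exp (μ * z))) z :=
    (hfrac.add hrat).mul hE
  have hdd : deriv (deriv (fun w : ℂ => P.eval w / Q.eval w * Complex.exp (μ * w))) z
      = deriv g z := hev2.deriv_eq
  rw [hdd, hgd.deriv]
  have hNd : (derivative N).eval z
      = (derivative (derivative P)).eval z * Q.eval z
        - P.eval z * (derivative (derivative Q)).eval z := by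
    simp [hN, Polynomial.derivative_mul]
    ring
  simp only [hN, Polynomial.eval_mul, Polynomial.eval_sub, Polynomial.eval_add,
    Polynomial.eval_pow, Polynomial.eval_C, Polynomial.eval_ofNat] at hNd ⊢
  rw [hNd]
  linear_combination tsch_alg (P.eval z) (Q.eval z) ((derivative P).eval z)
    ((derivative Q).eval z) ((derivative (derivative P)).eval z)
    ((derivative (derivative Q)).eval z) μ (Complex.exp (μ * z)) hz

/-- **Schrödinger form of the translating bilinear equation.**
For polynomials `P`, `Q`, `μ ∈ ℂ`, `ψ = (P/Q) e^{μz}` and `u = −2 (Q''Q − (Q')²)/Q²`,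
one has `−ψ'' + uψ + μ²ψ = −(e^{μz}/Q²)(P''Q − 2P'Q' + PQ'' + 2μ(P'Q − PQ'))` wherever
`Q ≠ 0`; in particular if the bilinear expression vanishes identically then `ψ` is an
eigenstate of `−d²/dz² + u` with eigenvalue `−μ²` on the set where `Q ≠ 0`. -/
theorem translating_schroedinger (P Q : Polynomial ℂ) (μ : ℂ) :
    (∀ z : ℂ, Q.eval z ≠ 0 →
      - deriv (deriv (fun w : ℂ => P.eval w / Q.eval w * Complex.exp (μ * w))) z
        + (-2 * ((Polynomial.derivative (Polynomial.derivative Q) * Q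
              - (Polynomial.derivative Q) ^ 2).eval z) / (Q.eval z) ^ 2)
          * (P.eval z / Q.eval z * Complex.exp (μ * z))
        + μ ^ 2 * (P.eval z / Q.eval z * Complex.exp (μ * z))
      = -(Complex.exp (μ * z) / (Q.eval z) ^ 2)
          * ((Polynomial.derivative (Polynomial.derivative P) * Q
              - 2 * Polynomial.derivative P * Polynomial.derivative Q
              + P * Polynomial.derivative (Polynomial.derivative Q)
              + Polynomial.C (2 * μ)
                * (Polynomial.derivative P * Q - P * Polynomial.derivative Q)).eval z))
    ∧ ((Polynomial.derivative (Polynomial.derivative P) * Q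
          - 2 * Polynomial.derivative P * Polynomial.derivative Q
          + P * Polynomial.derivative (Polynomial.derivative Q)
          + Polynomial.C (2 * μ)
            * (Polynomial.derivative P * Q - P * Polynomial.derivative Q) = 0) →
        ∀ z : ℂ, Q.eval z ≠ 0 →
          - deriv (deriv (fun w : ℂ => P.eval w / Q.eval w * Complex.exp (μ * w))) z
            + (-2 * ((Polynomial.derivative (Polynomial.derivative Q) * Q
                  - (Polynomial.derivative Q) ^ 2).eval z) / (Q.eval z) ^ 2)
              * (P.eval z / Q.eval z * Complex.exp (μ * z))
          = -μ ^ 2 * (P.eval z / Q.eval z * Complex.exp (μ * z))) := by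
  refine ⟨fun z hz => tsch_main P Q μ z hz, fun h0 z hz => ?_⟩
  have hmain := tsch_main P Q μ z hz
  rw [h0, Polynomial.eval_zero, mul_zero] at hmain
  linear_combination hmain
end

section
/- Let μ ∈ ℂ and let z_1, …, z_m, ζ_1, …, ζ_n be m + n pairwise distinct complex numbers such that ∑_{k ≠ j} 1/(z_j − z_k) = −μ z_j + ∑_{ℓ=1}^{n} 1/(z_j − ζ_ℓ) for every j = 1, …, m, and ∑_{ℓ ≠ j} 1/(ζ_j − ζ_ℓ) = μ ζ_j + ∑_{k=1}^{m} 1/(ζ_j − z_k) for every j = 1, …, n (the stationarity equations for m positive and n negative unit vortices in a quadrupole background flow). Then the polynomials P(z) = ∏_{j=1}^{m}(z − z_j) and Q(z) = ∏_{ℓ=1}^{n}(z − ζ_ℓ) satisfy P''Q − 2P'Q' + PQ'' + 2μz(P'Q − PQ') − 2μ(m − n) PQ = 0 identically. -/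
open Polynomial Finset

lemma aux_eval_prod {ι : Type*} (s : Finset ι) (r : ι → ℂ) (a : ℂ) :
    eval a (∏ i ∈ s, (X - C (r i))) = ∏ i ∈ s, (a - r i) := by
  simp [eval_prod]

lemma aux_eval_deriv {ι : Type*} [DecidableEq ι] (s : Finset ι) (r : ι → ℂ) (a : ℂ)
    (h : ∀ i ∈ s, a - r i ≠ 0) :
    eval a (derivative (∏ i ∈ s, (X - C (r i))))
      = (∏ i ∈ s, (a - r i)) * ∑ i ∈ s, (a - r i)⁻¹ := by
  induction s using Finset.induction_on with
  | empty => simp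
  | @insert i s hi ih =>
    rw [Finset.prod_insert hi, derivative_mul, Finset.sum_insert hi, Finset.prod_insert hi]
    have hne : a - r i ≠ 0 := h i (Finset.mem_insert_self i s)
    have ih' := ih (fun j hj => h j (Finset.mem_insert_of_mem hj))
    simp only [eval_add, eval_mul, derivative_sub, derivative_X, derivative_C, sub_zero,
      eval_one, eval_sub, eval_X, eval_C, one_mul, ih', aux_eval_prod]
    field_simp

/-- **Quadrupole background flow equilibria satisfy the bilinear equation.**
If `z_1, …, z_m, ζ_1, …, ζ_n` are pairwise distinct and satisfy the stationarity
equations for `m` positive and `n` negative unit vortices in a quadrupole background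
flow with parameter `μ`, then `P = ∏ (z − z_j)`, `Q = ∏ (z − ζ_ℓ)` satisfy
`P''Q − 2P'Q' + PQ'' + 2μz(P'Q − PQ') − 2μ(m − n)PQ = 0`. -/
theorem quadrupole_vortices_bilinear (μ : ℂ) (m n : ℕ) (z : Fin m → ℂ) (ζ : Fin n → ℂ)
    (hz : Function.Injective z) (hζ : Function.Injective ζ)
    (hzζ : ∀ (j : Fin m) (k : Fin n), z j ≠ ζ k)
    (h1 : ∀ j : Fin m,
      ∑ k ∈ Finset.univ.erase j, 1 / (z j - z k)
        = -μ * z j + ∑ l : Fin n, 1 / (z j - ζ l))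
    (h2 : ∀ j : Fin n,
      ∑ l ∈ Finset.univ.erase j, 1 / (ζ j - ζ l)
        = μ * ζ j + ∑ k : Fin m, 1 / (ζ j - z k))
    (P Q : Polynomial ℂ)
    (hP : P = ∏ j : Fin m, (Polynomial.X - Polynomial.C (z j)))
    (hQ : Q = ∏ l : Fin n, (Polynomial.X - Polynomial.C (ζ l))) :
    Polynomial.derivative (Polynomial.derivative P) * Q
      - 2 * Polynomial.derivative P * Polynomial.derivative Q
      + P * Polynomial.derivative (Polynomial.derivative Q)
      + Polynomial.C (2 * μ) * Polynomial.X
        * (Polynomial.derivative P * Q - P * Polynomial.derivative Q)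
      - Polynomial.C (2 * μ * ((m : ℂ) - (n : ℂ))) * (P * Q) = 0 := by
  -- trivial case m = n = 0
  rcases Nat.eq_zero_or_pos (m + n) with hmn | hmn
  · have hm : m = 0 := by omega
    have hn : n = 0 := by omega
    subst hm; subst hn
    simp [hP, hQ]
  set F : ℂ[X] := derivative (derivative P) * Q - 2 * derivative P * derivative Q
      + P * derivative (derivative Q)
      + C (2 * μ) * X * (derivative P * Q - P * derivative Q)
      - C (2 * μ * ((m : ℂ) - (n : ℂ))) * (P * Q) with hF
  show F = 0
  have hPm : P.Monic := by
    rw [hP]; exact monic_prod_of_monic _ _ fun i _ => monic_X_sub_C _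
  have hQm : Q.Monic := by
    rw [hQ]; exact monic_prod_of_monic _ _ fun i _ => monic_X_sub_C _
  have hdegP : P.natDegree = m := by
    rw [hP, natDegree_prod _ _ fun i _ => X_sub_C_ne_zero (z i)]
    simp
  have hdegQ : Q.natDegree = n := by
    rw [hQ, natDegree_prod _ _ fun i _ => X_sub_C_ne_zero (ζ i)]
    simp
  have hdegPQ : (P * Q).natDegree = m + n := by
    rw [natDegree_mul hPm.ne_zero hQm.ne_zero, hdegP, hdegQ]
  -- roots at the z j
  have hrootz : ∀ j : Fin m, eval (z j) F = 0 := by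
    intro j
    have hzz : ∀ k ∈ Finset.univ.erase j, z j - z k ≠ 0 := by
      intro k hk
      exact sub_ne_zero.mpr fun h => (Finset.mem_erase.mp hk).1 (hz h.symm)
    have hzzeta : ∀ l ∈ (Finset.univ : Finset (Fin n)), z j - ζ l ≠ 0 :=
      fun l _ => sub_ne_zero.mpr (hzζ j l)
    set R : ℂ[X] := ∏ k ∈ Finset.univ.erase j, (X - C (z k)) with hR
    have hPfac : P = (X - C (z j)) * R := by
      rw [hP, ← Finset.mul_prod_erase Finset.univ _ (Finset.mem_univ j)]
    set Rv : ℂ := ∏ k ∈ Finset.univ.erase j, (z j - z k) with hRv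
    set Qv : ℂ := ∏ l : Fin n, (z j - ζ l) with hQv
    have eP : eval (z j) P = 0 := by rw [hPfac]; simp
    have eP1 : eval (z j) (derivative P) = eval (z j) R := by
      rw [hPfac, derivative_mul]; simp
    have eP2 : eval (z j) (derivative (derivative P)) = 2 * eval (z j) (derivative R) := by
      rw [hPfac]
      simp only [derivative_mul, derivative_add, derivative_sub, derivative_X, derivative_C,
        sub_zero, one_mul]
      simp only [eval_add, eval_mul, eval_sub, eval_X, eval_C, sub_self, zero_mul, mul_zero]
      ring
    have eR : eval (z j) R = Rv := aux_eval_prod _ _ _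
    have eR' : eval (z j) (derivative R)
        = Rv * ∑ k ∈ Finset.univ.erase j, (z j - z k)⁻¹ := aux_eval_deriv _ _ _ hzz
    have eQ : eval (z j) Q = Qv := by rw [hQ]; exact aux_eval_prod _ _ _
    have eQ' : eval (z j) (derivative Q) = Qv * ∑ l : Fin n, (z j - ζ l)⁻¹ := by
      rw [hQ]; exact aux_eval_deriv _ _ _ hzzeta
    have h1j := h1 j
    simp only [one_div] at h1j
    simp only [hF, eval_sub, eval_add, eval_mul, eval_ofNat, eval_C, eval_X,
      eP, eP1, eP2, eQ, eQ', eR, eR']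
    linear_combination (2 * Rv * Qv) * h1j
  -- roots at the ζ l
  have hrootζ : ∀ l : Fin n, eval (ζ l) F = 0 := by
    intro l
    have hzz : ∀ k ∈ Finset.univ.erase l, ζ l - ζ k ≠ 0 := by
      intro k hk
      exact sub_ne_zero.mpr fun h => (Finset.mem_erase.mp hk).1 (hζ h.symm)
    have hzzeta : ∀ k ∈ (Finset.univ : Finset (Fin m)), ζ l - z k ≠ 0 :=
      fun k _ => sub_ne_zero.mpr fun h => (hzζ k l) h.symm
    set S : ℂ[X] := ∏ k ∈ Finset.univ.erase l, (X - C (ζ k)) with hS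
    have hQfac : Q = (X - C (ζ l)) * S := by
      rw [hQ, ← Finset.mul_prod_erase Finset.univ _ (Finset.mem_univ l)]
    set Sv : ℂ := ∏ k ∈ Finset.univ.erase l, (ζ l - ζ k) with hSv
    set Pv : ℂ := ∏ k : Fin m, (ζ l - z k) with hPv
    have eQ : eval (ζ l) Q = 0 := by rw [hQfac]; simp
    have eQ1 : eval (ζ l) (derivative Q) = eval (ζ l) S := by
      rw [hQfac, derivative_mul]; simp
    have eQ2 : eval (ζ l) (derivative (derivative Q)) = 2 * eval (ζ l) (derivative S) := by
      rw [hQfac]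
      simp only [derivative_mul, derivative_add, derivative_sub, derivative_X, derivative_C,
        sub_zero, one_mul]
      simp only [eval_add, eval_mul, eval_sub, eval_X, eval_C, sub_self, zero_mul, mul_zero]
      ring
    have eS : eval (ζ l) S = Sv := aux_eval_prod _ _ _
    have eS' : eval (ζ l) (derivative S)
        = Sv * ∑ k ∈ Finset.univ.erase l, (ζ l - ζ k)⁻¹ := aux_eval_deriv _ _ _ hzz
    have eP : eval (ζ l) P = Pv := by rw [hP]; exact aux_eval_prod _ _ _
    have eP' : eval (ζ l) (derivative P) = Pv * ∑ k : Fin m, (ζ l - z k)⁻¹ := by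
      rw [hP]; exact aux_eval_deriv _ _ _ hzzeta
    have h2l := h2 l
    simp only [one_div] at h2l
    simp only [hF, eval_sub, eval_add, eval_mul, eval_ofNat, eval_C, eval_X,
      eQ, eQ1, eQ2, eS, eS', eP, eP']
    linear_combination (2 * Pv * Sv) * h2l
  -- divisibility by P * Q
  have hdvd : P * Q ∣ F := by
    set w : Fin m ⊕ Fin n → ℂ := Sum.elim z ζ with hw
    have hwinj : Function.Injective w := by
      intro a b hab
      cases a with
      | inl a => cases b with
        | inl b => exact congrArg Sum.inl (hz hab)
        | inr b => exact absurd hab (hzζ a b)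
      | inr a => cases b with
        | inl b => exact absurd hab.symm (hzζ b a)
        | inr b => exact congrArg Sum.inr (hζ hab)
    have hPQ : P * Q = ∏ i : Fin m ⊕ Fin n, (X - C (w i)) := by
      rw [Fintype.prod_sum_type, hP, hQ]; rfl
    rw [hPQ]
    refine Fintype.prod_dvd_of_coprime (Polynomial.pairwise_coprime_X_sub_C hwinj) fun i => ?_
    rw [dvd_iff_isRoot]
    cases i with
    | inl j => exact hrootz j
    | inr l => exact hrootζ l
  -- degree bound
  have hdP' : (derivative P).natDegree ≤ m - 1 := hdegP ▸ natDegree_derivative_le P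
  have hdQ' : (derivative Q).natDegree ≤ n - 1 := hdegQ ▸ natDegree_derivative_le Q
  have hdP'' : (derivative (derivative P)).natDegree ≤ m - 1 :=
    le_trans (natDegree_derivative_le _) (by omega)
  have hdQ'' : (derivative (derivative Q)).natDegree ≤ n - 1 :=
    le_trans (natDegree_derivative_le _) (by omega)
  have hP1 : m = 0 → P = 1 := by intro hm; subst hm; simpa using hP
  have hQ1 : n = 0 → Q = 1 := by intro hn; subst hn; simpa using hQ
  have hAdeg : (derivative P * Q - P * derivative Q).natDegree ≤ m + n - 1 := by
    rcases Nat.eq_zero_or_pos m with hm | hm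
    · rw [hP1 hm]
      simp only [derivative_one, zero_mul, one_mul, zero_sub, natDegree_neg]
      omega
    rcases Nat.eq_zero_or_pos n with hn | hn
    · rw [hQ1 hn]
      simp only [derivative_one, mul_zero, mul_one, sub_zero]
      omega
    refine le_trans (natDegree_sub_le _ _) (max_le ?_ ?_)
    · exact le_trans (natDegree_mul_le) (by omega)
    · exact le_trans (natDegree_mul_le) (by omega)
  have hdegF : F.natDegree ≤ m + n := by
    rw [hF]
    refine le_trans (natDegree_sub_le _ _) (max_le ?_ ?_)
    · refine le_trans (natDegree_add_le _ _) (max_le ?_ ?_)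
      · refine le_trans (natDegree_add_le _ _) (max_le ?_ ?_)
        · refine le_trans (natDegree_sub_le _ _) (max_le ?_ ?_)
          · exact le_trans natDegree_mul_le (by omega)
          · refine le_trans natDegree_mul_le ?_
            have : (2 * derivative P : ℂ[X]).natDegree ≤ m - 1 :=
              le_trans natDegree_mul_le (by simpa using hdP')
            omega
        · exact le_trans natDegree_mul_le (by omega)
      · refine le_trans natDegree_mul_le ?_
        have h1' : (C (2 * μ) * X : ℂ[X]).natDegree ≤ 1 :=
          le_trans natDegree_mul_le (by rw [natDegree_C, natDegree_X])
        omega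
    · exact le_trans natDegree_mul_le (by rw [natDegree_C, hdegPQ]; omega)
  -- top coefficient vanishes
  have hPQtop : (P * Q).coeff (m + n) = 1 := by
    have := (hPm.mul hQm).coeff_natDegree
    rwa [hdegPQ] at this
  have hcoeff : F.coeff (m + n) = 0 := by
    have c1 : (derivative (derivative P) * Q).coeff (m + n) = 0 := by
      rcases Nat.eq_zero_or_pos m with hm | hm
      · rw [hP1 hm]; simp
      · exact coeff_eq_zero_of_natDegree_lt
          (lt_of_le_of_lt (le_trans natDegree_mul_le (add_le_add hdP'' hdegQ.le)) (by omega))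
    have c2 : (2 * derivative P * derivative Q).coeff (m + n) = 0 := by
      rcases Nat.eq_zero_or_pos m with hm | hm
      · rw [hP1 hm]; simp
      rcases Nat.eq_zero_or_pos n with hn | hn
      · rw [hQ1 hn]; simp
      have hb : (2 * derivative P * derivative Q).natDegree ≤ (m - 1) + (n - 1) :=
        le_trans natDegree_mul_le
          (add_le_add (le_trans natDegree_mul_le (by simpa using hdP')) hdQ')
      exact coeff_eq_zero_of_natDegree_lt (lt_of_le_of_lt hb (by omega))
    have c3 : (P * derivative (derivative Q)).coeff (m + n) = 0 := by
      rcases Nat.eq_zero_or_pos n with hn | hn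
      · rw [hQ1 hn]; simp
      · exact coeff_eq_zero_of_natDegree_lt
          (lt_of_le_of_lt (le_trans natDegree_mul_le (add_le_add hdegP.le hdQ'')) (by omega))
    have cPQ' : (P * derivative Q).coeff (m + n - 1) = (n : ℂ) := by
      rcases Nat.eq_zero_or_pos n with hn | hn
      · rw [hQ1 hn]; subst hn; simp
      have hone : n - 1 + 1 = n := by omega
      have hQn : Q.coeff n = 1 := by rw [← hdegQ]; exact hQm.coeff_natDegree
      have hq' : (derivative Q).coeff (n - 1) = (n : ℂ) := by
        rw [coeff_derivative, hone, hQn, one_mul]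
        exact_mod_cast congrArg (Nat.cast : ℕ → ℂ) hone
      have hqd : (derivative Q).natDegree = n - 1 := by
        refine le_antisymm hdQ' (le_natDegree_of_ne_zero ?_)
        rw [hq']
        exact_mod_cast Nat.cast_ne_zero.mpr (by omega)
      have hlc : (derivative Q).leadingCoeff = (n : ℂ) := by
        rw [← coeff_natDegree, hqd]; exact hq'
      have hcm := coeff_mul_degree_add_degree P (derivative Q)
      rw [hdegP, hqd] at hcm
      have hidx : m + (n - 1) = m + n - 1 := by omega
      rw [hidx] at hcm
      rw [hcm, hPm.leadingCoeff, one_mul, hlc]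
    have cDPQ : (derivative (P * Q)).coeff (m + n - 1) = ((m + n : ℕ) : ℂ) := by
      rw [coeff_derivative]
      have : m + n - 1 + 1 = m + n := by omega
      rw [this, hPQtop, one_mul]
      exact_mod_cast congrArg (Nat.cast : ℕ → ℂ) this
    have cA : (derivative P * Q - P * derivative Q).coeff (m + n - 1)
        = (m : ℂ) - (n : ℂ) := by
      have hsum : (derivative P * Q).coeff (m + n - 1) + (P * derivative Q).coeff (m + n - 1)
          = ((m + n : ℕ) : ℂ) := by
        rw [← coeff_add, ← derivative_mul]
        exact cDPQ
      rw [coeff_sub, cPQ']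
      rw [cPQ'] at hsum
      push_cast at hsum
      linear_combination hsum
    have c4 : (C (2 * μ) * X * (derivative P * Q - P * derivative Q)).coeff (m + n)
        = 2 * μ * ((m : ℂ) - (n : ℂ)) := by
      obtain ⟨N', hN'⟩ : ∃ N', m + n = N' + 1 := ⟨m + n - 1, by omega⟩
      rw [mul_assoc, coeff_C_mul, hN', coeff_X_mul]
      have : N' = m + n - 1 := by omega
      rw [this, cA]
    have c5 : (C (2 * μ * ((m : ℂ) - (n : ℂ))) * (P * Q)).coeff (m + n)
        = 2 * μ * ((m : ℂ) - (n : ℂ)) := by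
      rw [coeff_C_mul, hPQtop, mul_one]
    rw [hF]
    simp only [coeff_sub, coeff_add]
    rw [c1, c2, c3, c4, c5]
    ring
  -- conclude
  by_contra hF0
  obtain ⟨g, hg⟩ := hdvd
  have hg0 : g ≠ 0 := fun h => hF0 (by rw [hg, h, mul_zero])
  have hdeq : F.natDegree = m + n + g.natDegree := by
    rw [hg, natDegree_mul (mul_ne_zero hPm.ne_zero hQm.ne_zero) hg0, hdegPQ]
  have hgdeg : g.natDegree = 0 := by omega
  have hgC : g = C (g.coeff 0) := eq_C_of_natDegree_eq_zero hgdeg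
  have : F.coeff (m + n) = g.coeff 0 := by
    conv_lhs => rw [hg, hgC]
    rw [coeff_mul_C, hPQtop, one_mul]
  rw [hcoeff] at this
  exact hg0 (by rw [hgC, ← this, map_zero])
end

section
/- Let k_1, …, k_ℓ be pairwise distinct nonnegative integers (ℓ ≥ 1). Then the Wronskian W(H_{k_1}, …, H_{k_ℓ}) of the corresponding physicist's Hermite polynomials is a nonzero polynomial of degree exactly k_1 + k_2 + … + k_ℓ − ℓ(ℓ−1)/2. -/
open Polynomial

/-- The physicist's Hermite polynomials over `ℂ`. -/
noncomputable def physHermite : ℕ → Polynomial ℂ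
  | 0 => 1
  | 1 => 2 * Polynomial.X
  | n + 2 => 2 * Polynomial.X * physHermite (n + 1)
      - Polynomial.C (2 * ((n : ℂ) + 1)) * physHermite n

lemma hC2 : (Polynomial.C (2:ℂ)) = 2 := map_ofNat _ 2

lemma ph_degree_le : ∀ n : ℕ, (physHermite n).degree ≤ n
  | 0 => by simp [physHermite]
  | 1 => by
      simp only [physHermite, ← hC2]
      refine le_trans (degree_mul_le _ _) ?_
      refine le_trans (add_le_add degree_C_le degree_X_le) ?_
      simp
  | n + 2 => by
      have h1 := ph_degree_le (n+1)
      have h0 := ph_degree_le n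
      simp only [physHermite, ← hC2]
      refine le_trans (degree_sub_le _ _) (max_le ?_ ?_)
      · refine le_trans (degree_mul_le _ _) ?_
        refine le_trans (add_le_add (le_trans (degree_mul_le _ _)
          (add_le_add degree_C_le degree_X_le)) h1) ?_
        simp
        norm_cast
        omega
      · refine le_trans (degree_mul_le _ _) ?_
        refine le_trans (add_le_add degree_C_le h0) ?_
        simp
        exact_mod_cast Nat.le_add_right n 2

lemma ph_coeff : ∀ n : ℕ, (physHermite n).coeff n = 2 ^ n
  | 0 => by simp [physHermite]
  | 1 => by
      simp only [physHermite, ← hC2, coeff_C_mul, coeff_X_one]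
      norm_num
  | n + 2 => by
      have h1 := ph_coeff (n+1)
      have hz : (physHermite n).coeff (n+2) = 0 :=
        coeff_eq_zero_of_degree_lt (lt_of_le_of_lt (ph_degree_le n)
          (by exact_mod_cast Nat.lt_add_of_pos_right two_pos))
      have hX : (2 * X * physHermite (n+1) : ℂ[X]) = C 2 * (X * physHermite (n+1)) := by
        rw [hC2]; ring
      simp only [physHermite, coeff_sub, coeff_C_mul, hz, mul_zero, sub_zero, hX,
        coeff_X_mul, h1]
      ring

lemma ph_ne_zero (n : ℕ) : physHermite n ≠ 0 := fun h => by
  have h2 := ph_coeff n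
  rw [h] at h2
  exact pow_ne_zero n (two_ne_zero) (by simpa using h2.symm)

lemma ph_natDegree (n : ℕ) : (physHermite n).natDegree = n := by
  refine le_antisymm (natDegree_le_iff_degree_le.mpr (ph_degree_le n)) ?_
  refine le_natDegree_of_ne_zero ?_
  rw [ph_coeff]
  exact pow_ne_zero n two_ne_zero

lemma ph_leadingCoeff (n : ℕ) : (physHermite n).leadingCoeff = 2 ^ n := by
  rw [leadingCoeff, ph_natDegree, ph_coeff]

lemma ph_deriv : ∀ n : ℕ, derivative (physHermite (n+1)) = C (2*((n:ℂ)+1)) * physHermite n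
  | 0 => by
      simp [physHermite, ← hC2]
  | 1 => by
      show derivative (physHermite (0+2)) = _
      simp only [physHermite, ← hC2]
      simp [derivative_mul, derivative_X]
      ring
  | n + 2 => by
      have ih0 := ph_deriv n
      have ih1 := ph_deriv (n+1)
      show derivative (physHermite (n+1+2)) = _
      rw [show physHermite (n+1+2) = 2 * Polynomial.X * physHermite (n + 2)
          - Polynomial.C (2 * (((n+1:ℕ) : ℂ) + 1)) * physHermite (n+1) from by
        simp [physHermite]]
      have ih1' : derivative (physHermite (n+2)) = C (2*((((n+1):ℕ):ℂ)+1)) * physHermite (n+1) := ih1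
      have hdef2 : physHermite (n+2) = 2 * Polynomial.X * physHermite (n + 1)
          - Polynomial.C (2 * ((n:ℂ) + 1)) * physHermite n := by simp [physHermite]
      have hb : Polynomial.C (2 * (((n+2:ℕ):ℂ) + 1)) = Polynomial.C (2*((((n+1):ℕ):ℂ)+1)) + 2 := by
        rw [show (2 * (((n+2:ℕ):ℂ) + 1)) = 2*((((n+1):ℕ):ℂ)+1) + 2 by push_cast; ring, C_add, hC2]
      simp only [derivative_sub, derivative_mul, derivative_X, derivative_C, derivative_ofNat,
        ih1', ih0, zero_mul, mul_one, zero_add, add_zero, sub_zero]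
      rw [hb]
      linear_combination (-(Polynomial.C (2*((((n+1):ℕ):ℂ)+1)))) * hdef2

lemma ph_iter_deriv (i : ℕ) : ∀ kk : ℕ, derivative^[i] (physHermite kk)
    = C ((2:ℂ)^i * (kk.descFactorial i : ℂ)) * physHermite (kk - i) := by
  induction i with
  | zero => intro kk; simp
  | succ i ih =>
      intro kk
      rw [Function.iterate_succ_apply', ih kk]
      rw [derivative_mul, derivative_C, zero_mul, zero_add]
      rcases h : kk - i with _ | m
      · have h1 : kk < i + 1 := by omega
        have hd : (kk.descFactorial (i+1) : ℂ) = 0 := by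
          rw [Nat.descFactorial_eq_zero_iff_lt.mpr h1]; simp
        rw [hd]
        simp [physHermite]
      · have hle : i ≤ kk := by omega
        rw [ph_deriv m]
        have h2 : kk - (i+1) = m := by omega
        have h3 : (kk.descFactorial (i+1) : ℂ) = ((kk - i : ℕ) : ℂ) * kk.descFactorial i := by
          rw [Nat.descFactorial_succ]; push_cast; ring
        rw [h2, h3, h]  -- may need adjusting
        rw [← mul_assoc, ← C_mul]
        congr 1
        push_cast
        ring

lemma triangle_le_sum {l : ℕ} (k : Fin l → ℕ) (hinj : Function.Injective k) :
    ∑ i ∈ Finset.range l, i ≤ ∑ i : Fin l, k i := by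
  classical
  set s : Finset ℕ := Finset.image k Finset.univ with hs
  have hcard : s.card = l := by
    rw [hs, Finset.card_image_of_injective _ hinj, Finset.card_univ, Fintype.card_fin]
  set f := s.orderEmbOfFin hcard with hf
  have hmono : StrictMono f := (s.orderEmbOfFin hcard).strictMono
  have hle : ∀ m : ℕ, ∀ h : m < l, m ≤ f ⟨m, h⟩ := by
    intro m
    induction m with
    | zero => intro h; exact Nat.zero_le _
    | succ m ih =>
        intro h
        have hm : m < l := Nat.lt_of_succ_lt h
        have h1 := hmono (show (⟨m, hm⟩ : Fin l) < ⟨m+1, h⟩ from by simp [Fin.lt_def])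
        have h2 := ih hm
        omega
  have hinjf : Function.Injective f := hmono.injective
  have himg : Finset.image f Finset.univ = s := by
    apply Finset.coe_injective
    rw [Finset.coe_image, Finset.coe_univ, Set.image_univ]
    exact s.range_orderEmbOfFin hcard
  have h2 : ∑ i : Fin l, (f i : ℕ) = ∑ m ∈ s, m := by
    rw [← himg, Finset.sum_image (fun x _ y _ h => hinjf h)]
  have h3 : ∑ m ∈ s, m = ∑ i : Fin l, k i := by
    rw [hs, Finset.sum_image (fun x _ y _ h => hinj h)]
  calc ∑ i ∈ Finset.range l, i = ∑ i : Fin l, (i : ℕ) :=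
        (Fin.sum_univ_eq_sum_range (fun i => i) l).symm
    _ ≤ ∑ i : Fin l, (f i : ℕ) := Finset.sum_le_sum (fun i _ => by
        simpa using hle i i.isLt)
    _ = ∑ i : Fin l, k i := by rw [h2, h3]

/-- **Degree of a Wronskian of distinct Hermite polynomials.**
For pairwise distinct nonnegative integers `k_1, …, k_ℓ` (with `ℓ ≥ 1`), the Wronskian
`W(H_{k_1}, …, H_{k_ℓ})` is a nonzero polynomial of degree exactly
`k_1 + … + k_ℓ − ℓ(ℓ−1)/2`. -/
theorem hermiteWronskian_ne_zero_and_degree (l : ℕ) (hl : 1 ≤ l) (k : Fin l → ℕ)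
    (hinj : Function.Injective k) :
    wronskian (fun i : Fin l => physHermite (k i)) ≠ 0 ∧
    ((wronskian (fun i : Fin l => physHermite (k i))).natDegree : ℤ)
      = (∑ i : Fin l, (k i : ℤ)) - (l : ℤ) * ((l : ℤ) - 1) / 2 := by
  classical
  set S : ℕ := ∑ i : Fin l, k i with hS
  set t : ℕ := ∑ i ∈ Finset.range l, i with ht
  have hts : t ≤ S := triangle_le_sum k hinj
  set N : ℕ := S - t with hN
  set A : Matrix (Fin l) (Fin l) (Polynomial ℂ) :=
    Matrix.of (fun i j : Fin l => (Polynomial.derivative^[(i:ℕ)] (physHermite (k j)))) with hA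
  have hw : wronskian (fun i : Fin l => physHermite (k i)) = A.det := rfl
  have hentry : ∀ i j : Fin l,
      A i j = C ((2:ℂ)^(i:ℕ) * ((k j).descFactorial i : ℂ)) * physHermite (k j - i) :=
    fun i j => ph_iter_deriv _ _
  have hsigma_sum : ∀ σ : Equiv.Perm (Fin l), (∑ j : Fin l, ((σ j : ℕ))) = t := by
    intro σ
    rw [ht, ← Fin.sum_univ_eq_sum_range (fun i => i) l]
    exact Equiv.sum_comp σ (fun j : Fin l => (j:ℕ))
  have key : ∀ σ : Equiv.Perm (Fin l),
      (∏ j : Fin l, A (σ j) j).natDegree ≤ N ∧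
      (∏ j : Fin l, A (σ j) j).coeff N
        = ∏ j : Fin l, (((k j).descFactorial (σ j) : ℂ) * 2^(k j)) := by
    intro σ
    by_cases hgood : ∀ j, ((σ j : ℕ)) ≤ k j
    · have hT : (∏ j : Fin l, A (σ j) j)
          = C (∏ j : Fin l, ((2:ℂ)^((σ j):ℕ) * ((k j).descFactorial (σ j) : ℂ)))
            * ∏ j : Fin l, physHermite (k j - σ j) := by
        simp_rw [hentry]
        rw [Finset.prod_mul_distrib, map_prod]
      have hdegsum : (∑ j : Fin l, (k j - ((σ j):ℕ))) = N := by
        rw [Finset.sum_tsub_distrib _ (fun j _ => hgood j), hsigma_sum σ, ← hS]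
      have hP : (∏ j : Fin l, physHermite (k j - σ j)).natDegree = N := by
        rw [Polynomial.natDegree_prod _ _ (fun j _ => ph_ne_zero _)]
        simp_rw [ph_natDegree]
        exact hdegsum
      constructor
      · rw [hT]
        refine le_trans natDegree_mul_le ?_
        rw [natDegree_C, zero_add, hP]
      · rw [hT, coeff_C_mul, ← hP, ← leadingCoeff, leadingCoeff_prod]
        simp_rw [ph_leadingCoeff]
        rw [← Finset.prod_mul_distrib]
        refine Finset.prod_congr rfl ?_
        intro j _
        have h2 : (2:ℂ)^((σ j):ℕ) * 2^(k j - σ j) = 2^(k j) := by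
          rw [← pow_add]
          congr 1
          have := hgood j
          omega
        calc (2:ℂ)^((σ j):ℕ) * ((k j).descFactorial (σ j) : ℂ) * 2^(k j - σ j)
            = ((k j).descFactorial (σ j) : ℂ) * ((2:ℂ)^((σ j):ℕ) * 2^(k j - σ j)) := by ring
          _ = ((k j).descFactorial (σ j) : ℂ) * 2^(k j) := by rw [h2]
    · push_neg at hgood
      obtain ⟨j0, hj0⟩ := hgood
      have hc : ((k j0).descFactorial (σ j0) : ℂ) = 0 := by
        rw [Nat.descFactorial_eq_zero_iff_lt.mpr hj0]; simp
      have hTz : (∏ j : Fin l, A (σ j) j) = 0 := by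
        apply Finset.prod_eq_zero (Finset.mem_univ j0)
        rw [hentry, hc]
        simp
      rw [hTz]
      refine ⟨by simp, ?_⟩
      rw [Finset.prod_eq_zero (Finset.mem_univ j0) (by rw [hc]; ring)]
      simp
  have hdegle : A.det.natDegree ≤ N := by
    rw [Matrix.det_apply']
    refine Polynomial.natDegree_sum_le_of_forall_le _ _ ?_
    intro σ _
    refine le_trans natDegree_mul_le ?_
    rw [Polynomial.natDegree_intCast, zero_add]
    exact (key σ).1
  have hcoeff : A.det.coeff N
      = (∏ j : Fin l, (2:ℂ)^(k j))
        * (Matrix.of (fun i j : Fin l => ((k j).descFactorial i : ℂ))).det := by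
    rw [Matrix.det_apply', Polynomial.finset_sum_coeff, Matrix.det_apply', Finset.mul_sum]
    refine Finset.sum_congr rfl ?_
    intro σ _
    rw [Polynomial.coeff_intCast_mul, (key σ).2, Finset.prod_mul_distrib]
    simp only [Matrix.of_apply]
    ring
  have hD : (Matrix.of (fun i j : Fin l => ((k j).descFactorial i : ℂ))).det ≠ 0 := by
    set B : Matrix (Fin l) (Fin l) ℂ := Matrix.of (fun i j : Fin l =>
        (descPochhammer ℂ (j:ℕ)).eval ((k i : ℕ) : ℂ)) with hB
    have h1 : (Matrix.of (fun i j : Fin l => ((k j).descFactorial i : ℂ))) = B.transpose := by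
      ext i j
      simp only [hB, Matrix.of_apply, Matrix.transpose_apply]
      exact (descPochhammer_eval_eq_descFactorial ℂ (k j) (i:ℕ)).symm
    rw [h1, Matrix.det_transpose, hB,
      ← Matrix.det_eval_matrixOfPolynomials_eq_det_vandermonde
        (fun i : Fin l => ((k i : ℂ))) (fun j : Fin l => descPochhammer ℂ (j:ℕ))
        (fun i => descPochhammer_natDegree ℂ _) (fun i => monic_descPochhammer ℂ _),
      Matrix.det_vandermonde]
    rw [Finset.prod_ne_zero_iff]
    intro i _
    rw [Finset.prod_ne_zero_iff]
    intro j hj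
    have hij : i ≠ j := fun h => by
      rw [h] at hj
      exact absurd (Finset.mem_Ioi.mp hj) (lt_irrefl _)
    have : k i ≠ k j := fun h => hij (hinj h)
    intro habs
    apply this
    have := sub_eq_zero.mp habs
    exact_mod_cast this.symm
  have hcoeffne : A.det.coeff N ≠ 0 := by
    rw [hcoeff]
    refine mul_ne_zero ?_ hD
    rw [Finset.prod_ne_zero_iff]
    exact fun i _ => pow_ne_zero _ two_ne_zero
  have hne : A.det ≠ 0 := fun h => hcoeffne (by rw [h]; simp)
  have hdeg : A.det.natDegree = N := le_antisymm hdegle (le_natDegree_of_ne_zero hcoeffne)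
  refine ⟨by rw [hw]; exact hne, ?_⟩
  rw [hw, hdeg]
  have hSZ : (∑ i : Fin l, ((k i) : ℤ)) = (S:ℤ) := by rw [hS]; push_cast; rfl
  have h2t : (t:ℤ) * 2 = (l:ℤ) * ((l:ℤ) - 1) := by
    have h := Finset.sum_range_id_mul_two l
    have hc : ((∑ i ∈ Finset.range l, i) * 2 : ℤ) = ((l * (l-1) : ℕ) : ℤ) := by
      exact_mod_cast congrArg (Nat.cast : ℕ → ℤ) h
    rw [ht]
    push_cast [Nat.cast_sub hl] at hc ⊢
    linarith
  rw [hSZ]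
  omega
end

section
/- The polynomials P(z) = (z+1)³ and Q(z) = (z+1)(z+2), of degrees m = 3 and n = 2, satisfy the quadrupole bilinear equation P''Q − 2P'Q' + PQ'' − 2z(P'Q − PQ') + 2(m−n)PQ = 0 identically in z, and P and Q have the common root z = −1 (so that P and Q are not coprime); hence the quadrupole bilinear equation admits polynomial solution pairs with common roots, beyond the coprime pairs formed by consecutive Wronskians of distinct Hermite polynomials. -/
open Polynomial

/-- **Non-coprime solutions of the quadrupole bilinear equation exist.**
The polynomials `P = (z+1)³` (degree `m = 3`) and `Q = (z+1)(z+2)` (degree `n = 2`)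
satisfy the quadrupole bilinear equation
`P''Q − 2P'Q' + PQ'' − 2z(P'Q − PQ') + 2(m−n)PQ = 0` identically, and they share the
common root `z = −1`, so they are not coprime: the quadrupole bilinear equation admits
polynomial solution pairs with common roots. -/
theorem quadrupole_noncoprime_solution :
    ((Polynomial.X + 1 : Polynomial ℂ) ^ 3).natDegree = 3 ∧
    ((Polynomial.X + 1 : Polynomial ℂ) * (Polynomial.X + 2)).natDegree = 2 ∧
    (Polynomial.derivative (Polynomial.derivative ((Polynomial.X + 1 : Polynomial ℂ) ^ 3))
        * ((Polynomial.X + 1) * (Polynomial.X + 2))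
      - 2 * Polynomial.derivative ((Polynomial.X + 1 : Polynomial ℂ) ^ 3)
          * Polynomial.derivative ((Polynomial.X + 1) * (Polynomial.X + 2))
      + (Polynomial.X + 1) ^ 3
          * Polynomial.derivative
              (Polynomial.derivative ((Polynomial.X + 1 : Polynomial ℂ) * (Polynomial.X + 2)))
      - 2 * Polynomial.X
        * (Polynomial.derivative ((Polynomial.X + 1 : Polynomial ℂ) ^ 3)
              * ((Polynomial.X + 1) * (Polynomial.X + 2))
            - (Polynomial.X + 1) ^ 3
                * Polynomial.derivative ((Polynomial.X + 1 : Polynomial ℂ) * (Polynomial.X + 2)))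
      + Polynomial.C ((2 : ℂ) * ((3 : ℂ) - 2))
          * ((Polynomial.X + 1) ^ 3 * ((Polynomial.X + 1) * (Polynomial.X + 2))) = 0) ∧
    ((Polynomial.X + 1 : Polynomial ℂ) ^ 3).eval (-1) = 0 ∧
    ((Polynomial.X + 1 : Polynomial ℂ) * (Polynomial.X + 2)).eval (-1) = 0 ∧
    ¬ IsCoprime ((Polynomial.X + 1 : Polynomial ℂ) ^ 3)
        ((Polynomial.X + 1 : Polynomial ℂ) * (Polynomial.X + 2)) := by
  refine ⟨?_, ?_, ?_, ?_, ?_, ?_⟩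
  · compute_degree!
  · compute_degree!
  · have h23 : Polynomial.C ((2:ℂ) * ((3:ℂ) - 2)) = 2 := by
      rw [show (2:ℂ) * ((3:ℂ) - 2) = 2 by norm_num]; exact map_ofNat Polynomial.C 2
    rw [h23]
    simp only [derivative_mul, derivative_pow, derivative_add, derivative_X, derivative_one,
      derivative_ofNat, Nat.cast_ofNat, map_ofNat, add_zero, mul_one, mul_zero, zero_mul,
      zero_add, Polynomial.derivative_one]
    ring_nf
    simp only [map_ofNat]
    ring
  · simp
  · simp
  · intro h
    have h2 : IsCoprime ((Polynomial.X + 1 : Polynomial ℂ)) ((Polynomial.X + 1 : Polynomial ℂ)) := by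
      have := (IsCoprime.of_isCoprime_of_dvd_left h (dvd_pow_self _ (by norm_num))).of_isCoprime_of_dvd_right (dvd_mul_right _ _)
      exact this
    rw [isCoprime_self] at h2
    have : ¬ IsUnit (Polynomial.X + 1 : Polynomial ℂ) := by
      intro hu
      have := Polynomial.natDegree_eq_zero_of_isUnit hu
      rw [show (Polynomial.X + 1 : Polynomial ℂ) = Polynomial.X + Polynomial.C 1 by norm_num,
        Polynomial.natDegree_X_add_C] at this
      exact one_ne_zero this
    exact this h2
end
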